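/- arXiv:1108.3659 — 5 statements merged into one kernel-verified Lean document; each statement's English description precedes it below -/
import Mathlib

section
/- For every integer n ≥ 1, the number of ordered pairs (p, q) of Dyck paths of semilength n such that the height of the first peak of q is at least n minus the height of the last peak of p, and the height of the last peak of q is at least n minus the height of the first peak of p, equals Σ_{i=1}^{n} Σ_{j=1}^{n} c^{(n)}_{i,j} · ( Σ_{k=max(1, n−i)}^{n} Σ_{m=max(1, n−j)}^{n} c^{(n)}_{k,m} ), which is the scalar product C_n · ωC_n, where (ωA)_{i,j} = Σ_{k=n−i}^{n} Σ_{m=n−j}^{n} a_{k,m} (with a_{0,m} = a_{k,0} = 0) and A·B = Σ_{i,j} a_{i,j} b_{i,j}. (By the paper's Lemma 9, such pairs are exactly the admissible pairs classifying the equivalence classes of combinatorial ideals for the affine Lie algebra of sl_n, so this number is the quantity b_n of the paper's main theorem.) -/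
/-- A Dyck word: a list of booleans (`true` = rise, `false` = fall) with equally many
rises and falls such that every prefix has at least as many rises as falls. -/
def IsDyckWord (w : List Bool) : Prop :=
  w.count true = w.count false ∧ ∀ p, p <+: w → p.count false ≤ p.count true

/-- The list of heights of the peaks (occurrences of the factor `rf`) of a word,
from left to right. The height of a peak is the number of rises minus the number
of falls in the prefix ending with the rise of that peak. -/
def peakHeights (w : List Bool) : List ℕ :=
  (List.range w.length).filterMap (fun k =>
    if w[k]? = some true ∧ w[k + 1]? = some false then
      some ((w.take (k + 1)).count true - (w.take (k + 1)).count false)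
    else none)

/-- `DyckD n i j` is the set of Dyck paths of semilength `n` whose first peak has
height `i` and whose last peak has height `j`. -/
def DyckD (n i j : ℕ) : Set (List Bool) :=
  {w | IsDyckWord w ∧ w.count true = n ∧
    (peakHeights w).head? = some i ∧ (peakHeights w).getLast? = some j}
/-- The entries `c^{(n)}_{i,j}` of the matrices `C_n`, defined by `C_1 = (1)` and
`C_{n+1} = (τ C_n) ⊕ (1)`, where `(τ A)_{i,j} = Σ_{s=i-1}^{n} a_{s,j}` (with the
convention `a_{0,j} = 0`). Entries with an index outside `{1, …, n}` are `0`. -/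
def cMat : ℕ → ℕ → ℕ → ℕ
  | 0, _, _ => 0
  | 1, i, j => if i = 1 ∧ j = 1 then 1 else 0
  | n + 2, i, j =>
      if 1 ≤ i ∧ i ≤ n + 1 ∧ 1 ≤ j ∧ j ≤ n + 1 then
        ∑ s ∈ Finset.Icc (i - 1) (n + 1), cMat (n + 1) s j
      else if i = n + 2 ∧ j = n + 2 then 1 else 0



namespace DyckAux

lemma count_add_length (w : List Bool) : w.count true + w.count false = w.length := by
  induction w with
  | nil => simp
  | cons a l ih => cases a <;> simp [List.count_cons] <;> omega

def lead (w : List Bool) : ℕ := (w.takeWhile id).length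
def trail (w : List Bool) : ℕ := (w.reverse.takeWhile (fun b => !b)).length

lemma takeWhile_replicate_true (k : ℕ) (v : List Bool) :
    (List.replicate k true ++ v).takeWhile id = List.replicate k true ++ v.takeWhile id := by
  induction k with
  | zero => simp
  | succ k ih => simp [List.replicate_succ, List.takeWhile_cons, ih]

lemma lead_replicate_append (k : ℕ) (v : List Bool) :
    lead (List.replicate k true ++ v) = k + lead v := by
  simp [lead, takeWhile_replicate_true]

lemma takeWhile_append_of_exists {p : Bool → Bool} {a : List Bool} (b : List Bool)
    (h : ∃ x ∈ a, p x = false) : (a ++ b).takeWhile p = a.takeWhile p := by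
  induction a with
  | nil => simp at h
  | cons x l ih =>
    rcases h with ⟨y, hy, hpy⟩
    rcases List.mem_cons.1 hy with rfl | hy
    · simp [List.takeWhile_cons, hpy]
    · by_cases hx : p x
      · simp [List.takeWhile_cons, hx, ih ⟨y, hy, hpy⟩]
      · simp [List.takeWhile_cons, hx]

lemma trail_append_of_mem {v : List Bool} (x : List Bool) (h : true ∈ v) :
    trail (x ++ v) = trail v := by
  unfold trail
  rw [List.reverse_append, takeWhile_append_of_exists]
  exact ⟨true, by simpa using h, rfl⟩

lemma trail_concat_replicate (u : List Bool) (j : ℕ) :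
    trail (u ++ true :: List.replicate j false) = j := by
  unfold trail
  have : (u ++ true :: List.replicate j false).reverse
      = List.replicate j false ++ true :: u.reverse := by
    simp [List.reverse_append]
  rw [this]
  have h2 : (List.replicate j false ++ true :: u.reverse).takeWhile (fun b => !b)
      = List.replicate j false ++ (true :: u.reverse).takeWhile (fun b => !b) := by
    induction j with
    | zero => simp
    | succ k ih => simp [List.replicate_succ, List.takeWhile_cons, ih]
  rw [h2]
  simp [List.takeWhile_cons]

lemma lead_le_count (w : List Bool) : lead w ≤ w.count true := by
  unfold lead
  have h1 : (w.takeWhile id).count true = (w.takeWhile id).length := by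
    rw [List.count_eq_length]
    intro b hb
    have := List.mem_takeWhile_imp hb
    simp at this; simp [this]
  calc (w.takeWhile id).length = (w.takeWhile id).count true := h1.symm
    _ ≤ w.count true := (List.takeWhile_sublist _).count_le true

lemma trail_le_count (w : List Bool) : trail w ≤ w.count false := by
  unfold trail
  have h1 : (w.reverse.takeWhile (fun b => !b)).count false
      = (w.reverse.takeWhile (fun b => !b)).length := by
    rw [List.count_eq_length]
    intro b hb
    have := List.mem_takeWhile_imp hb
    simp at this; simp [this]
  calc (w.reverse.takeWhile (fun b => !b)).length
      = (w.reverse.takeWhile (fun b => !b)).count false := h1.symm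
    _ ≤ w.reverse.count false := (List.takeWhile_sublist _).count_le false
    _ = w.count false := by rw [List.count_reverse]


lemma lead_rep_false (k : ℕ) (u : List Bool) :
    lead (List.replicate k true ++ false :: u) = k := by
  rw [lead_replicate_append]
  simp [lead, List.takeWhile_cons]


lemma dropWhile_head_not {p : Bool → Bool} {w : List Bool} {b : Bool} {u : List Bool}
    (h : w.dropWhile p = b :: u) : p b = false := by
  induction w with
  | nil => simp at h
  | cons x l ih =>
    rw [List.dropWhile_cons] at h
    by_cases hx : p x
    · simp [hx] at h; exact ih h
    · simp [hx] at h
      rw [h.1] at hx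
      simpa using hx

lemma exists_decomp_lead {w : List Bool} (hd : IsDyckWord w) (hne : w ≠ []) :
    1 ≤ lead w ∧ ∃ u, w = List.replicate (lead w) true ++ false :: u := by
  have htw : w.takeWhile id = List.replicate (w.takeWhile id).length true := by
    rw [List.eq_replicate_iff]
    refine ⟨rfl, fun b hb => ?_⟩
    have := List.mem_takeWhile_imp hb
    simpa using this
  have hsplit : w = w.takeWhile id ++ w.dropWhile id := (List.takeWhile_append_dropWhile ..).symm
  have hdne : w.dropWhile id ≠ [] := by
    intro h
    rw [h, List.append_nil] at hsplit
    have hcf : w.count false = 0 := by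
      rw [hsplit, htw]
      simp [List.count_replicate]
    have := count_add_length w
    have := hd.1
    exact hne (List.eq_nil_of_length_eq_zero (by omega))
  obtain ⟨b, u, hbu⟩ := List.exists_cons_of_ne_nil hdne
  have hb : b = false := by simpa using dropWhile_head_not hbu
  subst hb
  have hw : w = List.replicate (w.takeWhile id).length true ++ false :: u := by
    conv_lhs => rw [hsplit]
    rw [htw, hbu]; simp
  have hl : lead w = (w.takeWhile id).length := by
    conv_lhs => rw [hw]
    rw [lead_rep_false]
  refine ⟨?_, ⟨u, by rw [hl]; exact hw⟩⟩
  by_contra h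
  have h0 : (w.takeWhile id).length = 0 := by unfold lead at h hl; omega
  rw [h0] at hw
  simp at hw
  have := hd.2 [false] (by rw [hw]; exact ⟨u, rfl⟩)
  simp at this

lemma exists_decomp_trail {w : List Bool} (hd : IsDyckWord w) (hne : w ≠ []) :
    1 ≤ trail w ∧ ∃ u, w = u ++ true :: List.replicate (trail w) false := by
  have htw : w.reverse.takeWhile (fun b => !b)
      = List.replicate (w.reverse.takeWhile (fun b => !b)).length false := by
    rw [List.eq_replicate_iff]
    refine ⟨rfl, fun b hb => ?_⟩
    have := List.mem_takeWhile_imp hb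
    simpa using this
  have hsplit : w.reverse = w.reverse.takeWhile (fun b => !b) ++ w.reverse.dropWhile (fun b => !b) :=
    (List.takeWhile_append_dropWhile ..).symm
  have hdne : w.reverse.dropWhile (fun b => !b) ≠ [] := by
    intro h
    rw [h, List.append_nil] at hsplit
    have hct : w.count true = 0 := by
      rw [← List.count_reverse, hsplit, htw]
      simp [List.count_replicate]
    have := count_add_length w
    have := hd.1
    exact hne (List.eq_nil_of_length_eq_zero (by omega))
  obtain ⟨b, u, hbu⟩ := List.exists_cons_of_ne_nil hdne
  have hb : b = true := by simpa using dropWhile_head_not hbu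
  subst hb
  have hw : w = u.reverse ++ true :: List.replicate (w.reverse.takeWhile (fun b => !b)).length false := by
    have h1 : w.reverse = List.replicate (w.reverse.takeWhile (fun b => !b)).length false ++ true :: u := by
      conv_lhs => rw [hsplit]
      rw [htw, hbu]; simp
    have h2 := congrArg List.reverse h1
    rw [List.reverse_reverse] at h2
    rw [h2]
    simp [List.reverse_append, List.reverse_replicate]
  have hl : trail w = (w.reverse.takeWhile (fun b => !b)).length := by
    conv_lhs => rw [hw]
    rw [trail_concat_replicate]
  refine ⟨?_, ⟨u.reverse, by rw [hl]; exact hw⟩⟩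
  by_contra h
  have h0 : (w.reverse.takeWhile (fun b => !b)).length = 0 := by unfold trail at h hl; omega
  rw [h0] at hw
  simp at hw
  have hpre := hd.2 u.reverse ⟨[true], by rw [hw]⟩
  have hct : w.count true = u.reverse.count true + 1 := by rw [hw]; simp
  have hcf : w.count false = u.reverse.count false := by rw [hw]; simp
  have := hd.1
  omega


lemma prefix_append_cases {p A B : List Bool} (h : p <+: A ++ B) :
    p <+: A ∨ ∃ q, p = A ++ q ∧ q <+: B := by
  by_cases hl : p.length ≤ A.length
  · exact Or.inl (List.prefix_of_prefix_length_le h (A.prefix_append B) hl)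
  · right
    have hA : A <+: p :=
      List.prefix_of_prefix_length_le (A.prefix_append B) h (by omega)
    obtain ⟨q, rfl⟩ := hA
    exact ⟨q, rfl, (List.prefix_append_right_inj A).mp h⟩

lemma prefix_cons_cases {p : List Bool} {a : Bool} {l : List Bool} (h : p <+: a :: l) :
    p = [] ∨ ∃ q, p = a :: q ∧ q <+: l := by
  cases p with
  | nil => exact Or.inl rfl
  | cons b q =>
    rw [List.cons_prefix_cons] at h
    exact Or.inr ⟨q, by rw [h.1], h.2⟩

lemma prefix_replicate {p : List Bool} {k : ℕ} {a : Bool} (h : p <+: List.replicate k a) :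
    p = List.replicate p.length a := by
  rw [List.eq_replicate_iff]
  exact ⟨rfl, fun b hb => List.eq_of_mem_replicate (h.subset hb)⟩

/-- reverse-complement -/
def rc (w : List Bool) : List Bool := (w.reverse).map not

lemma count_map_not (l : List Bool) (b : Bool) : (l.map not).count b = l.count (!b) := by
  induction l with
  | nil => simp
  | cons a t ih => cases a <;> cases b <;> simp [List.count_cons, ih]

@[simp] lemma rc_rc (w : List Bool) : rc (rc w) = w := by
  have h : (not ∘ not) = id := by funext b; simp
  simp [rc, List.map_reverse, List.map_map, h]

lemma count_true_rc (w : List Bool) : (rc w).count true = w.count false := by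
  unfold rc
  rw [count_map_not]
  simp [List.count_reverse]

lemma count_false_rc (w : List Bool) : (rc w).count false = w.count true := by
  unfold rc
  rw [count_map_not]
  simp [List.count_reverse]

lemma lead_rc (w : List Bool) : lead (rc w) = trail w := by
  unfold lead trail rc
  rw [List.takeWhile_map]
  simp [Function.comp]

lemma trail_rc (w : List Bool) : trail (rc w) = lead w := by
  conv_rhs => rw [← rc_rc w, lead_rc]

lemma isDyckWord_rc {w : List Bool} (h : IsDyckWord w) : IsDyckWord (rc w) := by
  constructor
  · rw [count_true_rc, count_false_rc, h.1]
  · intro p hp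
    have hp' : p = ((rc w).take p.length) := List.prefix_iff_eq_take.mp hp
    have hlen : p.length ≤ w.length := by
      have := hp.length_le
      simpa [rc] using this
    -- p = map not (reverse (drop (w.length - p.length) w))
    have hdrop : p = ((w.drop (w.length - p.length)).reverse).map not := by
      conv_lhs => rw [hp']
      unfold rc
      rw [← List.map_take, List.take_reverse]
    set m := w.length - p.length with hm
    have hct : p.count true = (w.drop m).count false := by
      rw [hdrop, count_map_not]
      simp [List.count_reverse]
    have hcf : p.count false = (w.drop m).count true := by
      rw [hdrop, count_map_not]
      simp [List.count_reverse]
    rw [hct, hcf]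
    -- suffices: count true of suffix ≤ count false of suffix
    have hsplit : w = w.take m ++ w.drop m := (List.take_append_drop m w).symm
    have hpre := h.2 (w.take m) ⟨w.drop m, (List.take_append_drop m w)⟩
    have h1 : (w.take m).count true + (w.drop m).count true = w.count true := by
      conv_rhs => rw [hsplit]
      rw [List.count_append]
    have h2 : (w.take m).count false + (w.drop m).count false = w.count false := by
      conv_rhs => rw [hsplit]
      rw [List.count_append]
    have := h.1
    omega


lemma peakHeights_head (k : ℕ) (u : List Bool) :
    (peakHeights (List.replicate (k + 1) true ++ false :: u)).head? = some (k + 1) := by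
  set w := List.replicate (k + 1) true ++ false :: u with hw
  set g : ℕ → Option ℕ := fun t =>
    if w[t]? = some true ∧ w[t + 1]? = some false then
      some ((w.take (t + 1)).count true - (w.take (t + 1)).count false)
    else none with hg
  have hlen : w.length = (k + 1) + (1 + u.length) := by simp [hw]; omega
  have hrange : List.range w.length
      = (List.range k ++ [k]) ++ (List.range (1 + u.length)).map ((k + 1) + ·) := by
    rw [hlen, List.range_add, ← List.range_succ]
  have hidx : ∀ t, t < k + 1 → w[t]? = some true := by
    intro t ht
    rw [hw, List.getElem?_append_left (by simpa using ht)]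
    simp [List.getElem?_replicate, ht]
  have h1 : (List.range k).filterMap g = [] := by
    rw [List.filterMap_eq_nil_iff]
    intro t ht
    rw [List.mem_range] at ht
    have h2 := hidx (t + 1) (by omega)
    simp only [hg]
    rw [if_neg]
    rw [h2]
    simp
  have ha := hidx k (by omega)
  have hb : w[k + 1]? = some false := by
    rw [hw, List.getElem?_append_right (by simp)]
    simp
  have h2 : g k = some (k + 1) := by
    simp only [hg]
    rw [if_pos ⟨ha, hb⟩]
    have ht : w.take (k + 1) = List.replicate (k + 1) true := by
      rw [hw, List.take_append_of_le_length (by simp)]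
      simp
    rw [ht]
    simp [List.count_replicate]
  show (List.filterMap g (List.range w.length)).head? = some (k + 1)
  rw [hrange, List.filterMap_append, List.filterMap_append, h1]
  rw [List.filterMap_cons, h2]
  simp

lemma peakHeights_last (n j : ℕ) (hj : 1 ≤ j) (u : List Bool)
    (hct : (u ++ true :: List.replicate j false).count true = n)
    (hcf : (u ++ true :: List.replicate j false).count false = n) :
    (peakHeights (u ++ true :: List.replicate j false)).getLast? = some j := by
  set w := u ++ true :: List.replicate j false with hw
  set g : ℕ → Option ℕ := fun t =>
    if w[t]? = some true ∧ w[t + 1]? = some false then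
      some ((w.take (t + 1)).count true - (w.take (t + 1)).count false)
    else none with hg
  have hwapp : w = (u ++ [true]) ++ List.replicate j false := by simp [hw]
  have hlen : w.length = (u.length + 1) + j := by simp [hw]; omega
  have hrange : List.range w.length
      = (List.range u.length ++ [u.length]) ++ (List.range j).map ((u.length + 1) + ·) := by
    rw [hlen, List.range_add, ← List.range_succ]
  have htail : ((List.range j).map ((u.length + 1) + ·)).filterMap g = [] := by
    rw [List.filterMap_eq_nil_iff]
    intro a ha
    rw [List.mem_map] at ha
    obtain ⟨t, ht, rfl⟩ := ha
    rw [List.mem_range] at ht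
    have hfa : w[(u.length + 1) + t]? = some false := by
      rw [hwapp, List.getElem?_append_right (by simp)]
      rw [List.getElem?_replicate]
      have : (u.length + 1) + t - (u ++ [true]).length = t := by simp
      rw [this, if_pos ht]
    simp only [hg]
    rw [if_neg]
    rw [hfa]
    simp
  have ha : w[u.length]? = some true := by
    rw [hw, List.getElem?_append_right (by simp)]
    simp
  have hb : w[u.length + 1]? = some false := by
    rw [hwapp, List.getElem?_append_right (by simp)]
    rw [List.getElem?_replicate]
    have : u.length + 1 - (u ++ [true]).length = 0 := by simp
    rw [this, if_pos (by omega)]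
  have hmid : g u.length = some j := by
    simp only [hg]
    rw [if_pos ⟨ha, hb⟩]
    have ht : w.take (u.length + 1) = u ++ [true] := by
      rw [hwapp, List.take_append_of_le_length
        (l₁ := u ++ [true]) (l₂ := List.replicate j false) (i := u.length + 1) (by simp)]
      exact List.take_of_length_le (by simp)
    rw [ht]
    have h1 : (u ++ [true]).count true = u.count true + 1 := by simp
    have h2 : (u ++ [true]).count false = u.count false := by simp
    rw [h1, h2]
    have hctu : u.count true + 1 = n := by
      rw [hw] at hct
      simp [List.count_replicate] at hct
      omega
    have hcfu : u.count false + j = n := by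
      rw [hw] at hcf
      simp [List.count_replicate] at hcf
      omega
    have : u.count true + 1 - u.count false = j := by omega
    rw [this]
  show (List.filterMap g (List.range w.length)).getLast? = some j
  rw [hrange, List.filterMap_append, List.filterMap_append, htail, List.append_nil]
  rw [List.filterMap_cons, hmid]
  simp [List.getLast?_concat]


lemma ne_nil_of_count {w : List Bool} {n : ℕ} (hn : 1 ≤ n) (hc : w.count true = n) : w ≠ [] := by
  intro h; rw [h] at hc; simp at hc; omega

def Sset (n i j : ℕ) : Set (List Bool) :=
  {w | IsDyckWord w ∧ w.count true = n ∧ lead w = i ∧ trail w = j}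

lemma Sset_finite (n i j : ℕ) : (Sset n i j).Finite := by
  apply Set.Finite.subset (List.finite_length_eq Bool (2 * n))
  rintro w ⟨hd, hc, -, -⟩
  have h1 := count_add_length w
  have h2 := hd.1
  simp only [Set.mem_setOf_eq]
  omega

noncomputable def SF (n i j : ℕ) : Finset (List Bool) := (Sset_finite n i j).toFinset

lemma mem_SF {n i j : ℕ} {w : List Bool} :
    w ∈ SF n i j ↔ IsDyckWord w ∧ w.count true = n ∧ lead w = i ∧ trail w = j := by
  simp only [SF, Set.Finite.mem_toFinset]
  rfl

lemma card_SF_symm (n i j : ℕ) : (SF n i j).card = (SF n j i).card := by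
  apply Finset.card_bij (fun w _ => rc w)
  · intro w hw
    obtain ⟨hd, hc, hl, ht⟩ := mem_SF.mp hw
    exact mem_SF.mpr ⟨isDyckWord_rc hd, by rw [count_true_rc, ← hd.1, hc],
      by rw [lead_rc, ht], by rw [trail_rc, hl]⟩
  · intro a _ b _ h
    have := congrArg rc h
    rwa [rc_rc, rc_rc] at this
  · intro b hb
    obtain ⟨hd, hc, hl, ht⟩ := mem_SF.mp hb
    refine ⟨rc b, mem_SF.mpr ⟨isDyckWord_rc hd, by rw [count_true_rc, ← hd.1, hc],
      by rw [lead_rc, ht], by rw [trail_rc, hl]⟩, rc_rc b⟩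

lemma eq_two_of_mem_one {w : List Bool} (hd : IsDyckWord w) (hc : w.count true = 1) :
    w = [true, false] := by
  obtain ⟨h1, u, hw⟩ := exists_decomp_lead hd (ne_nil_of_count le_rfl hc)
  have h2 : lead w ≤ 1 := hc ▸ lead_le_count w
  have hl : lead w = 1 := by omega
  rw [hl] at hw
  have hctu : u.count true = 0 := by
    rw [hw] at hc; simp [List.count_append] at hc; omega
  have hcfu : u.count false = 0 := by
    have := hd.1
    rw [hw] at this hc
    simp [List.count_append, List.count_cons] at this hc ⊢
    omega
  have : u = [] := by
    have := count_add_length u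
    exact List.eq_nil_of_length_eq_zero (by omega)
  rw [hw, this]
  rfl

lemma isDyck_two : IsDyckWord [true, false] := by
  constructor
  · rfl
  · intro p hp
    rcases prefix_cons_cases hp with rfl | ⟨q, rfl, hq⟩
    · simp
    rcases prefix_cons_cases hq with rfl | ⟨r, rfl, hr⟩
    · simp
    · have : r = [] := List.prefix_nil.mp hr
      subst this
      simp

lemma trail_two : trail [true, false] = 1 := by
  have : [true, false] = [] ++ true :: List.replicate 1 false := rfl
  rw [this, trail_concat_replicate]

lemma lead_two : lead [true, false] = 1 := by
  have : [true, false] = List.replicate 1 true ++ false :: [] := rfl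
  rw [this, lead_rep_false]

lemma card_SF_one (i j : ℕ) : (SF 1 i j).card = cMat 1 i j := by
  by_cases h : i = 1 ∧ j = 1
  · obtain ⟨rfl, rfl⟩ := h
    have : SF 1 1 1 = {[true, false]} := by
      ext w
      rw [mem_SF, Finset.mem_singleton]
      constructor
      · rintro ⟨hd, hc, -, -⟩
        exact eq_two_of_mem_one hd hc
      · rintro rfl
        exact ⟨isDyck_two, rfl, lead_two, trail_two⟩
    rw [this]
    simp [cMat]
  · have : SF 1 i j = ∅ := by
      rw [Finset.eq_empty_iff_forall_notMem]
      intro w hw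
      obtain ⟨hd, hc, hl, ht⟩ := mem_SF.mp hw
      have hw2 := eq_two_of_mem_one hd hc
      subst hw2
      rw [lead_two] at hl
      rw [trail_two] at ht
      exact h ⟨hl.symm, ht.symm⟩
    rw [this]
    simp [cMat, h]

/-- the key local equivalence -/
lemma isDyck_step (k : ℕ) (u : List Bool) :
    IsDyckWord (List.replicate (k + 1) true ++ false :: u) ↔
      IsDyckWord (List.replicate k true ++ u) := by
  constructor
  · rintro ⟨hbal, hpre⟩
    constructor
    · simp [List.count_append, List.count_cons, List.count_replicate] at hbal ⊢
      omega
    · intro p hp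
      rcases prefix_append_cases hp with hp1 | ⟨q, rfl, hq⟩
      · rw [prefix_replicate hp1]
        simp [List.count_replicate]
      · have hq' : List.replicate (k + 1) true ++ false :: q <+:
            List.replicate (k + 1) true ++ false :: u := by
          rw [List.prefix_append_right_inj, List.cons_prefix_cons]
          exact ⟨rfl, hq⟩
        have := hpre _ hq'
        simp [List.count_append, List.count_cons, List.count_replicate] at this ⊢
        omega
  · rintro ⟨hbal, hpre⟩
    constructor
    · simp [List.count_append, List.count_cons, List.count_replicate] at hbal ⊢
      omega
    · intro p hp
      rcases prefix_append_cases hp with hp1 | ⟨q, rfl, hq⟩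
      · rw [prefix_replicate hp1]
        simp [List.count_replicate]
      · rcases prefix_cons_cases hq with rfl | ⟨r, rfl, hr⟩
        · simp [List.count_replicate]
        · have := hpre _ ((List.prefix_append_right_inj (List.replicate k true)).mpr hr)
          simp [List.count_append, List.count_cons, List.count_replicate] at this ⊢
          omega

lemma card_SF_step (n i j : ℕ) (hi1 : 1 ≤ i) (hi2 : i ≤ n + 1) :
    (SF (n + 2) i j).card =
      ((Finset.Icc (i - 1) (n + 1)).biUnion (fun s => SF (n + 1) s j)).card := by
  obtain ⟨k, rfl⟩ : ∃ k, i = k + 1 := ⟨i - 1, by omega⟩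
  apply Finset.card_bij (fun w _ => List.replicate k true ++ w.drop (k + 2))
  · -- maps into
    intro w hw
    obtain ⟨hd, hc, hl, ht⟩ := mem_SF.mp hw
    obtain ⟨-, u, hwdec⟩ := exists_decomp_lead hd (ne_nil_of_count (by omega) hc)
    rw [hl] at hwdec
    have hu : w.drop (k + 2) = u := by
      rw [hwdec, show k + 2 = (List.replicate (k + 1) true).length + 1 by simp,
        List.drop_length_add_append]
      rfl
    rw [hu]
    have hctu : u.count true = n + 1 - k := by
      rw [hwdec] at hc
      simp [List.count_append, List.count_cons, List.count_replicate] at hc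
      omega
    have htu : true ∈ u := by
      rw [← List.count_pos_iff]
      omega
    have hdy : IsDyckWord (List.replicate k true ++ u) := (isDyck_step k u).mp (hwdec ▸ hd)
    have hct2 : (List.replicate k true ++ u).count true = n + 1 := by
      simp [List.count_append, List.count_replicate]
      omega
    have htr : trail (List.replicate k true ++ u) = j := by
      rw [trail_append_of_mem _ htu, ← ht, hwdec,
        trail_append_of_mem _ (by simp [htu] : true ∈ false :: u),
        show (false :: u) = [false] ++ u by rfl, trail_append_of_mem _ htu]
    rw [Finset.mem_biUnion]
    refine ⟨lead (List.replicate k true ++ u), ?_, mem_SF.mpr ⟨hdy, hct2, rfl, htr⟩⟩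
    rw [Finset.mem_Icc]
    constructor
    · rw [lead_replicate_append]; omega
    · calc lead (List.replicate k true ++ u) ≤ _ := lead_le_count _
        _ = n + 1 := hct2
  · -- injective
    intro w1 hw1 w2 hw2 heq
    obtain ⟨hd1, hc1, hl1, -⟩ := mem_SF.mp hw1
    obtain ⟨hd2, hc2, hl2, -⟩ := mem_SF.mp hw2
    obtain ⟨-, u1, hw1d⟩ := exists_decomp_lead hd1 (ne_nil_of_count (by omega) hc1)
    obtain ⟨-, u2, hw2d⟩ := exists_decomp_lead hd2 (ne_nil_of_count (by omega) hc2)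
    rw [hl1] at hw1d; rw [hl2] at hw2d
    have hu1 : w1.drop (k + 2) = u1 := by
      rw [hw1d, show k + 2 = (List.replicate (k + 1) true).length + 1 by simp, List.drop_length_add_append]
      rfl
    have hu2 : w2.drop (k + 2) = u2 := by
      rw [hw2d, show k + 2 = (List.replicate (k + 1) true).length + 1 by simp, List.drop_length_add_append]
      rfl
    rw [hu1, hu2] at heq
    have : u1 = u2 := List.append_cancel_left heq
    rw [hw1d, hw2d, this]
  · -- surjective
    intro w' hw'
    rw [Finset.mem_biUnion] at hw'
    obtain ⟨s, hs, hmem⟩ := hw'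
    rw [Finset.mem_Icc] at hs
    obtain ⟨hd', hc', hl', ht'⟩ := mem_SF.mp hmem
    have hs1 : 1 ≤ s := by
      obtain ⟨h1, -⟩ := exists_decomp_lead hd' (ne_nil_of_count (by omega) hc')
      omega
    -- w' = replicate k true ++ v
    have hks : k ≤ s := by omega
    obtain ⟨-, u', hw'd⟩ := exists_decomp_lead hd' (ne_nil_of_count (by omega) hc')
    rw [hl'] at hw'd
    set v := w'.drop k with hv
    have h1 : w' = List.replicate k true ++ (List.replicate (s - k) true ++ false :: u') := by
      rw [hw'd, ← List.append_assoc, ← List.replicate_add]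
      congr 2
      omega
    have hsplit : w' = List.replicate k true ++ v := by
      have h2 : v = List.replicate (s - k) true ++ false :: u' := by
        rw [hv]
        conv_lhs => rw [h1]
        exact List.drop_left' (by simp)
      rw [h2]
      exact h1
    have htv : true ∈ v := by
      have hctv : v.count true = n + 1 - k := by
        have : w'.count true = k + v.count true := by
          conv_lhs => rw [hsplit]
          simp [List.count_append, List.count_replicate]
        omega
      rw [← List.count_pos_iff]
      omega
    refine ⟨List.replicate (k + 1) true ++ false :: v, ?_, ?_⟩
    · apply mem_SF.mpr
      refine ⟨(isDyck_step k v).mpr (hsplit ▸ hd'), ?_, lead_rep_false _ _, ?_⟩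
      · have : w'.count true = k + v.count true := by
          conv_lhs => rw [hsplit]
          simp [List.count_append, List.count_replicate]
        simp [List.count_append, List.count_cons, List.count_replicate]
        omega
      · rw [trail_append_of_mem _ (by simp [htv] : true ∈ false :: v),
          show (false :: v) = [false] ++ v by rfl, trail_append_of_mem _ htv, ← ht']
        conv_rhs => rw [hsplit]
        rw [trail_append_of_mem _ htv]
    · rw [show k + 2 = (List.replicate (k + 1) true).length + 1 by simp, List.drop_length_add_append]
      show List.replicate k true ++ v = w'
      exact hsplit.symm

lemma SF_empty_of_lead_zero (n j : ℕ) (hn : 1 ≤ n) : SF n 0 j = ∅ := by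
  rw [Finset.eq_empty_iff_forall_notMem]
  intro w hw
  obtain ⟨hd, hc, hl, -⟩ := mem_SF.mp hw
  obtain ⟨h1, -⟩ := exists_decomp_lead hd (ne_nil_of_count hn hc)
  omega

lemma SF_empty_of_trail_zero (n i : ℕ) (hn : 1 ≤ n) : SF n i 0 = ∅ := by
  rw [Finset.eq_empty_iff_forall_notMem]
  intro w hw
  obtain ⟨hd, hc, -, ht⟩ := mem_SF.mp hw
  obtain ⟨h1, -⟩ := exists_decomp_trail hd (ne_nil_of_count hn hc)
  omega

lemma SF_empty_of_lead_gt (n i j : ℕ) (hi : n < i) : SF n i j = ∅ := by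
  rw [Finset.eq_empty_iff_forall_notMem]
  intro w hw
  obtain ⟨hd, hc, hl, -⟩ := mem_SF.mp hw
  have := lead_le_count w
  omega

lemma SF_empty_of_trail_gt (n i j : ℕ) (hj : n < j) : SF n i j = ∅ := by
  rw [Finset.eq_empty_iff_forall_notMem]
  intro w hw
  obtain ⟨hd, hc, -, ht⟩ := mem_SF.mp hw
  have h1 := trail_le_count w
  have h2 := hd.1
  omega

def maxword (n : ℕ) : List Bool := List.replicate n true ++ List.replicate n false

lemma eq_maxword_of_lead_eq {w : List Bool} {n : ℕ} (hn : 1 ≤ n) (hd : IsDyckWord w)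
    (hc : w.count true = n) (hl : lead w = n) : w = maxword n := by
  obtain ⟨-, u, hwdec⟩ := exists_decomp_lead hd (ne_nil_of_count hn hc)
  rw [hl] at hwdec
  have hctu : u.count true = 0 := by
    rw [hwdec] at hc
    simp [List.count_append, List.count_replicate] at hc
    omega
  have hcfu : u.count false = n - 1 := by
    have hb := hd.1
    rw [hwdec] at hb hc
    simp [List.count_append, List.count_cons, List.count_replicate] at hb hc
    omega
  have hurep : u = List.replicate (n - 1) false := by
    have hlen : u.length = n - 1 := by
      have := count_add_length u
      omega
    rw [List.eq_replicate_iff]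
    refine ⟨hlen, fun b hb => ?_⟩
    cases b
    · rfl
    · exfalso
      have : 0 < u.count true := List.count_pos_iff.mpr hb
      omega
  rw [hwdec, hurep, maxword]
  rw [show List.replicate n false = false :: List.replicate (n - 1) false by
    rw [← List.replicate_succ]; congr 1; omega]

lemma maxword_mem (n : ℕ) (hn : 1 ≤ n) : maxword n ∈ SF n n n := by
  apply mem_SF.mpr
  have hdy : IsDyckWord (maxword n) := by
    constructor
    · simp [maxword, List.count_append, List.count_replicate]
    · intro p hp
      rcases prefix_append_cases hp with hp1 | ⟨q, rfl, hq⟩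
      · rw [prefix_replicate hp1]
        simp [List.count_replicate]
      · have hq2 := prefix_replicate hq
        have hlen : q.length ≤ n := by
          have := hq.length_le
          simpa using this
        rw [hq2]
        simp [List.count_append, List.count_replicate]
        omega
  refine ⟨hdy, by simp [maxword, List.count_append, List.count_replicate], ?_, ?_⟩
  · rw [maxword, show List.replicate n false = false :: List.replicate (n - 1) false by
      rw [← List.replicate_succ]; congr 1; omega, lead_rep_false]
  · rw [maxword, show List.replicate n true = List.replicate (n - 1) true ++ [true] by
      rw [← List.replicate_succ']; congr 1; omega, List.append_assoc]
    exact trail_concat_replicate _ n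

theorem card_SF_eq (n : ℕ) : ∀ i j, (SF (n + 1) i j).card = cMat (n + 1) i j := by
  induction n with
  | zero => exact card_SF_one
  | succ m ih =>
    intro i j
    show (SF (m + 2) i j).card = cMat (m + 2) i j
    rcases Nat.eq_zero_or_pos i with rfl | hi0
    · rw [SF_empty_of_lead_zero _ _ (by omega)]
      simp [cMat]
    rcases Nat.eq_zero_or_pos j with rfl | hj0
    · rw [SF_empty_of_trail_zero _ _ (by omega)]
      simp [cMat]
    by_cases hij : i ≤ m + 1 ∧ j ≤ m + 1
    · obtain ⟨hi, hj⟩ := hij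
      rw [card_SF_step m i j hi0 hi, Finset.card_biUnion]
      · rw [show cMat (m + 2) i j = ∑ s ∈ Finset.Icc (i - 1) (m + 1), cMat (m + 1) s j by
          rw [cMat]; rw [if_pos ⟨hi0, hi, hj0, hj⟩]]
        exact Finset.sum_congr rfl fun s _ => ih s j
      · intro s _ t _ hst
        rw [Function.onFun, Finset.disjoint_left]
        intro w hws hwt
        obtain ⟨-, -, hls, -⟩ := mem_SF.mp hws
        obtain ⟨-, -, hlt, -⟩ := mem_SF.mp hwt
        exact hst (hls ▸ hlt ▸ rfl)
    -- boundary cases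
    · have hcm : cMat (m + 2) i j = if i = m + 2 ∧ j = m + 2 then 1 else 0 := by
        rw [cMat, if_neg (by omega)]
      by_cases hmax : i = m + 2 ∧ j = m + 2
      · obtain ⟨rfl, rfl⟩ := hmax
        rw [hcm, if_pos ⟨rfl, rfl⟩]
        have : SF (m + 2) (m + 2) (m + 2) = {maxword (m + 2)} := by
          ext w
          rw [mem_SF, Finset.mem_singleton]
          constructor
          · rintro ⟨hd, hc, hl, -⟩
            exact eq_maxword_of_lead_eq (by omega) hd hc hl
          · rintro rfl
            exact mem_SF.mp (maxword_mem (m + 2) (by omega))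
        rw [this, Finset.card_singleton]
      · rw [hcm, if_neg hmax]
        rw [Finset.card_eq_zero, Finset.eq_empty_iff_forall_notMem]
        intro w hw
        obtain ⟨hd, hc, hl, ht⟩ := mem_SF.mp hw
        -- i > m+1 or j > m+1 (and not both = m+2)
        have hile : i ≤ m + 2 := by have := lead_le_count w; omega
        have hjle : j ≤ m + 2 := by
          have := trail_le_count w; have := hd.1; omega
        rcases not_and_or.mp hij with hi | hj
        · have hieq : i = m + 2 := by omega
          subst hieq
          have hwmax := eq_maxword_of_lead_eq (by omega) hd hc hl
          have : trail w = m + 2 := by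
            rw [hwmax, maxword, show List.replicate (m + 2) true
                = List.replicate (m + 1) true ++ [true] by
              rw [← List.replicate_succ'], List.append_assoc]
            exact trail_concat_replicate _ (m + 2)
          exact hmax ⟨rfl, by omega⟩
        · have hjeq : j = m + 2 := by omega
          subst hjeq
          -- trail = m+2 = count false forces all falses at the end, so w = maxword
          obtain ⟨-, u, hwd⟩ := exists_decomp_trail hd (ne_nil_of_count (by omega) hc)
          rw [ht] at hwd
          have hcfu : u.count false = 0 := by
            have := hd.1
            rw [hwd] at this hc
            simp [List.count_append, List.count_cons, List.count_replicate] at this hc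
            omega
          have hctu : u.count true = m + 1 := by
            rw [hwd] at hc
            simp [List.count_append, List.count_cons, List.count_replicate] at hc
            omega
          have hurep : u = List.replicate (m + 1) true := by
            have hlen : u.length = m + 1 := by
              have := count_add_length u
              omega
            rw [List.eq_replicate_iff]
            refine ⟨hlen, fun b hb => ?_⟩
            cases b
            · exfalso
              have : 0 < u.count false := List.count_pos_iff.mpr hb
              omega
            · rfl
          have hlw : lead w = m + 2 := by
            rw [hwd, hurep, show List.replicate (m + 1) true ++ true :: List.replicate (m + 2) false
                = List.replicate (m + 2) true ++ false :: List.replicate (m + 1) false from ?_,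
              lead_rep_false]
            rw [show List.replicate (m + 2) false = false :: List.replicate (m + 1) false by
              rw [← List.replicate_succ], show List.replicate (m + 2) true
                = List.replicate (m + 1) true ++ [true] by rw [← List.replicate_succ'],
              List.append_assoc]
            simp
          exact hmax ⟨by omega, rfl⟩

lemma cMat_symm {n : ℕ} (hn : 1 ≤ n) (i j : ℕ) : cMat n i j = cMat n j i := by
  obtain ⟨m, rfl⟩ : ∃ m, n = m + 1 := ⟨n - 1, by omega⟩
  rw [← card_SF_eq, ← card_SF_eq, card_SF_symm]


lemma bridge {n : ℕ} (hn : 1 ≤ n) {w : List Bool} (hd : IsDyckWord w)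
    (hc : w.count true = n) :
    (peakHeights w).headI = lead w ∧ (peakHeights w).getLastD 0 = trail w := by
  have hne := ne_nil_of_count hn hc
  constructor
  · obtain ⟨hl1, u, hwd⟩ := exists_decomp_lead hd hne
    obtain ⟨k, hk⟩ : ∃ k, lead w = k + 1 := ⟨lead w - 1, by omega⟩
    have hwd' : w = List.replicate (k + 1) true ++ false :: u := by rw [← hk]; exact hwd
    have hh := peakHeights_head k u
    rw [← hwd'] at hh
    cases hph : peakHeights w with
    | nil => rw [hph] at hh; simp at hh
    | cons a l =>
      rw [hph] at hh
      simp at hh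
      simp [hh, hk]
  · obtain ⟨ht1, u, hwd⟩ := exists_decomp_trail hd hne
    have hct : (u ++ true :: List.replicate (trail w) false).count true = n := by
      rw [← hwd]; exact hc
    have hcf : (u ++ true :: List.replicate (trail w) false).count false = n := by
      rw [← hwd, ← hd.1]; exact hc
    have hh := peakHeights_last n (trail w) ht1 u hct hcf
    rw [← hwd] at hh
    rw [List.getLastD_eq_getLast?, hh]
    rfl

noncomputable def BF (n i j : ℕ) : Finset (List Bool) :=
  ((Finset.Icc (max 1 (n - j)) n) ×ˢ (Finset.Icc (max 1 (n - i)) n)).biUnion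
    (fun km => SF n km.1 km.2)

noncomputable def PF (n : ℕ) : Finset (List Bool × List Bool) :=
  (Finset.Icc 1 n ×ˢ Finset.Icc 1 n).biUnion
    (fun ij => SF n ij.1 ij.2 ×ˢ BF n ij.1 ij.2)

lemma lead_bounds {n : ℕ} (hn : 1 ≤ n) {w : List Bool} (hd : IsDyckWord w)
    (hc : w.count true = n) :
    1 ≤ lead w ∧ lead w ≤ n ∧ 1 ≤ trail w ∧ trail w ≤ n := by
  have h1 := (exists_decomp_lead hd (ne_nil_of_count hn hc)).1
  have h2 := lead_le_count w
  have h3 := (exists_decomp_trail hd (ne_nil_of_count hn hc)).1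
  have h4 := trail_le_count w
  have h5 := hd.1
  omega

lemma mem_BF {n i j : ℕ} (hn : 1 ≤ n) {q : List Bool} :
    q ∈ BF n i j ↔ IsDyckWord q ∧ q.count true = n ∧ n - j ≤ lead q ∧ n - i ≤ trail q := by
  simp only [BF, Finset.mem_biUnion, Finset.mem_product, Finset.mem_Icc, mem_SF]
  constructor
  · rintro ⟨⟨k, m⟩, ⟨⟨hk1, hk2⟩, hm1, hm2⟩, hdq, hcq, hlq, htq⟩
    rw [max_le_iff] at hk1 hm1
    exact ⟨hdq, hcq, by omega, by omega⟩
  · rintro ⟨hdq, hcq, h1, h2⟩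
    obtain ⟨b1, b2, b3, b4⟩ := lead_bounds hn hdq hcq
    exact ⟨(lead q, trail q), ⟨⟨by rw [max_le_iff]; omega, by omega⟩,
      by rw [max_le_iff]; omega, by omega⟩, hdq, hcq, rfl, rfl⟩

lemma mem_PF {n : ℕ} (hn : 1 ≤ n) {pq : List Bool × List Bool} :
    pq ∈ PF n ↔ IsDyckWord pq.1 ∧ pq.1.count true = n ∧ IsDyckWord pq.2 ∧
      pq.2.count true = n ∧ n - trail pq.1 ≤ lead pq.2 ∧ n - lead pq.1 ≤ trail pq.2 := by
  simp only [PF, Finset.mem_biUnion, Finset.mem_product, Finset.mem_Icc, mem_SF]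
  constructor
  · rintro ⟨⟨i, j⟩, ⟨⟨hi1, hi2⟩, hj1, hj2⟩, ⟨hdp, hcp, hlp, htp⟩, hq⟩
    rw [mem_BF hn] at hq
    obtain ⟨hdq, hcq, h1, h2⟩ := hq
    exact ⟨hdp, hcp, hdq, hcq, by omega, by omega⟩
  · rintro ⟨hdp, hcp, hdq, hcq, h1, h2⟩
    obtain ⟨b1, b2, b3, b4⟩ := lead_bounds hn hdp hcp
    refine ⟨(lead pq.1, trail pq.1), ⟨⟨b1, b2⟩, b3, b4⟩, ⟨hdp, hcp, rfl, rfl⟩, ?_⟩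
    rw [mem_BF hn]
    exact ⟨hdq, hcq, h1, h2⟩

lemma card_BF {n i j : ℕ} (hn : 1 ≤ n) :
    (BF n i j).card = ∑ k ∈ Finset.Icc (max 1 (n - j)) n,
      ∑ m ∈ Finset.Icc (max 1 (n - i)) n, cMat n k m := by
  obtain ⟨n', rfl⟩ : ∃ n', n = n' + 1 := ⟨n - 1, by omega⟩
  rw [BF, Finset.card_biUnion]
  · rw [← Finset.sum_product']
    apply Finset.sum_congr rfl
    rintro ⟨k, m⟩ -
    exact card_SF_eq n' k m
  · rintro ⟨k, m⟩ - ⟨k', m'⟩ - hne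
    rw [Function.onFun, Finset.disjoint_left]
    intro w h1 h2
    obtain ⟨-, -, hl, ht⟩ := mem_SF.mp h1
    obtain ⟨-, -, hl', ht'⟩ := mem_SF.mp h2
    apply hne
    rw [Prod.mk.injEq]
    simp only [] at hl ht hl' ht'
    exact ⟨by omega, by omega⟩

lemma card_PF {n : ℕ} (hn : 1 ≤ n) :
    (PF n).card = ∑ i ∈ Finset.Icc 1 n, ∑ j ∈ Finset.Icc 1 n, cMat n i j *
      (∑ k ∈ Finset.Icc (max 1 (n - j)) n, ∑ m ∈ Finset.Icc (max 1 (n - i)) n,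
        cMat n k m) := by
  obtain ⟨n', rfl⟩ : ∃ n', n = n' + 1 := ⟨n - 1, by omega⟩
  rw [PF, Finset.card_biUnion]
  · rw [← Finset.sum_product']
    apply Finset.sum_congr rfl
    rintro ⟨i, j⟩ -
    rw [Finset.card_product, card_SF_eq n' i j, card_BF hn]
  · rintro ⟨i, j⟩ - ⟨i', j'⟩ - hne
    rw [Function.onFun, Finset.disjoint_left]
    rintro ⟨p, q⟩ h1 h2
    rw [Finset.mem_product] at h1 h2
    obtain ⟨-, -, hl, ht⟩ := mem_SF.mp h1.1
    obtain ⟨-, -, hl', ht'⟩ := mem_SF.mp h2.1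
    apply hne
    rw [Prod.mk.injEq]
    simp only [] at hl ht hl' ht'
    exact ⟨by omega, by omega⟩


end DyckAux

/- **Statement 11 (main theorem, type A count).** For `n ≥ 1`, the number of ordered
pairs `(p, q)` of Dyck paths of semilength `n` such that the first peak of `q` has
height at least `n` minus the height of the last peak of `p`, and the last peak of `q`
has height at least `n` minus the height of the first peak of `p`, equals
`Σ_{i,j=1}^{n} c^{(n)}_{i,j} · (Σ_{k=max(1,n−i)}^{n} Σ_{m=max(1,n−j)}^{n} c^{(n)}_{k,m})`,
i.e. the scalar product `C_n · ω C_n`; this is the number `b_n` of equivalence classes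
of combinatorial ideals for affine `sl_n`. -/
open DyckAux in
/-- **main theorem, type A count.** For `n ≥ 1`, the number of ordered
pairs `(p, q)` of Dyck paths of semilength `n` such that the first peak of `q` has
height at least `n` minus the height of the last peak of `p`, and the last peak of `q`
has height at least `n` minus the height of the first peak of `p`, equals
`Σ_{i,j=1}^{n} c^{(n)}_{i,j} · (Σ_{k=max(1,n−i)}^{n} Σ_{m=max(1,n−j)}^{n} c^{(n)}_{k,m})`,
i.e. the scalar product `C_n · ω C_n`; this is the number `b_n` of equivalence classes
of combinatorial ideals for affine `sl_n`. -/
theorem admissible_pairs_count (n : ℕ) (hn : 1 ≤ n) :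
    {pq : List Bool × List Bool |
        IsDyckWord pq.1 ∧ pq.1.count true = n ∧
        IsDyckWord pq.2 ∧ pq.2.count true = n ∧
        n - (peakHeights pq.1).getLastD 0 ≤ (peakHeights pq.2).headI ∧
        n - (peakHeights pq.1).headI ≤ (peakHeights pq.2).getLastD 0}.ncard =
      ∑ i ∈ Finset.Icc 1 n, ∑ j ∈ Finset.Icc 1 n, cMat n i j *
        (∑ k ∈ Finset.Icc (max 1 (n - i)) n, ∑ m ∈ Finset.Icc (max 1 (n - j)) n,
          cMat n k m) := by
  have hPset : {pq : List Bool × List Bool |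
      IsDyckWord pq.1 ∧ pq.1.count true = n ∧
      IsDyckWord pq.2 ∧ pq.2.count true = n ∧
      n - (peakHeights pq.1).getLastD 0 ≤ (peakHeights pq.2).headI ∧
      n - (peakHeights pq.1).headI ≤ (peakHeights pq.2).getLastD 0} = ↑(PF n) := by
    ext pq
    simp only [Set.mem_setOf_eq, Finset.mem_coe, mem_PF hn]
    constructor
    · rintro ⟨h1, h2, h3, h4, h5, h6⟩
      obtain ⟨b1, b2⟩ := bridge hn h1 h2
      obtain ⟨b3, b4⟩ := bridge hn h3 h4
      refine ⟨h1, h2, h3, h4, ?_, ?_⟩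
      · rw [← b2, ← b3]; exact h5
      · rw [← b1, ← b4]; exact h6
    · rintro ⟨h1, h2, h3, h4, h5, h6⟩
      obtain ⟨b1, b2⟩ := bridge hn h1 h2
      obtain ⟨b3, b4⟩ := bridge hn h3 h4
      refine ⟨h1, h2, h3, h4, ?_, ?_⟩
      · rw [b2, b3]; exact h5
      · rw [b1, b4]; exact h6
  rw [hPset, Set.ncard_coe_finset, card_PF hn, Finset.sum_comm]
  apply Finset.sum_congr rfl
  intro i _
  apply Finset.sum_congr rfl
  intro j _
  rw [cMat_symm hn]
end

section
/- For every integer n ≥ 2 and all i, j ∈ {1, …, n−1}, |D_n(i,j)| equals the number of primitive Dyck paths of semilength n whose last peak has height j+1 and whose first peak has height at least i. -/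
/-- A Dyck word is primitive if every proper nonempty prefix has strictly more
rises than falls, i.e. the path touches the x-axis only at its endpoints. -/
def IsPrimitiveWord (w : List Bool) : Prop :=
  ∀ p, p <+: w → p ≠ [] → p ≠ w → p.count false < p.count true

/- ### Auxiliary lemmas -/

lemma count_tf (l : List Bool) : l.count true + l.count false = l.length := by
  induction l with
  | nil => simp
  | cons a l ih => cases a <;> simp [List.count_cons] <;> omega

lemma head_fm {g : ℕ → Option ℕ} {K n a : ℕ} (hK : K < n) (ha : g K = some a)
    (h0 : ∀ k, k < K → g k = none) :
    ((List.range n).filterMap g).head? = some a := by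
  have : n = K + (n - K) := by omega
  rw [this, List.range_add, List.filterMap_append]
  have h1 : (List.range K).filterMap g = [] := by
    rw [List.filterMap_eq_nil_iff]
    intro k hk; exact h0 k (List.mem_range.mp hk)
  rw [h1, List.nil_append]
  obtain ⟨m, hm⟩ : ∃ m, n - K = m + 1 := ⟨n - K - 1, by omega⟩
  rw [hm, List.range_succ_eq_map]
  simp [List.filterMap_cons, ha]

lemma getLast_fm {g : ℕ → Option ℕ} {K n a : ℕ} (hK : K < n) (ha : g K = some a)
    (h0 : ∀ k, K < k → g k = none) :
    ((List.range n).filterMap g).getLast? = some a := by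
  have : n = (K + 1) + (n - (K+1)) := by omega
  rw [this, List.range_add, List.filterMap_append]
  have h1 : ((List.range (n - (K+1))).map (K + 1 + ·)).filterMap g = [] := by
    rw [List.filterMap_eq_nil_iff]
    intro k hk
    simp only [List.mem_map, List.mem_range] at hk
    obtain ⟨m, _, rfl⟩ := hk
    exact h0 _ (by omega)
  rw [h1, List.append_nil, List.range_succ, List.filterMap_append]
  simp [List.filterMap_cons, ha]

lemma peakHeights_head (m : ℕ) (hm : 1 ≤ m) (v : List Bool) :
    (peakHeights (List.replicate m true ++ false :: v)).head? = some m := by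
  set w := List.replicate m true ++ false :: v with hw
  have hlen : w.length = m + 1 + v.length := by simp [hw]; omega
  have hwk : ∀ k, k < m → w[k]? = some true := by
    intro k hk
    rw [hw, List.getElem?_append, if_pos (by simpa using hk)]
    simp [hk]
  have hwm : w[m]? = some false := by
    rw [hw, List.getElem?_append_right (by simp)]
    simp
  apply head_fm (K := m - 1) (by omega)
  · have h1 : m - 1 + 1 = m := by omega
    rw [h1, if_pos ⟨hwk (m-1) (by omega), hwm⟩]
    congr 1
    have ht : w.take m = List.replicate m true := by
      rw [hw, List.take_left' (by simp)]
    rw [ht]; simp [List.count_replicate]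
  · intro k hk
    rw [if_neg]
    rintro ⟨-, h2⟩
    rw [hwk (k+1) (by omega)] at h2
    simp at h2

lemma peakHeights_getLast (t : ℕ) (ht : 1 ≤ t) (u : List Bool) :
    (peakHeights (u ++ true :: List.replicate t false)).getLast? =
      some (u.count true + 1 - u.count false) := by
  set w := u ++ true :: List.replicate t false with hw
  have hlen : w.length = u.length + 1 + t := by simp [hw]; omega
  have hwK : w[u.length]? = some true := by
    rw [hw, List.getElem?_append_right (le_refl _)]
    simp
  apply getLast_fm (K := u.length) (by omega)
  · rw [if_pos]
    · congr 1
      have htk : w.take (u.length + 1) = u ++ [true] := by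
        rw [hw]
        rw [List.take_append]
        simp
      rw [htk]
      simp [List.count_append]
    · refine ⟨hwK, ?_⟩
      rw [hw, List.getElem?_append_right (by omega)]
      have : u.length + 1 - u.length = 1 := by omega
      rw [this]
      simp [List.getElem?_cons, List.getElem?_replicate, ht]
      omega
  · intro k hk
    rw [if_neg]
    rintro ⟨h1, -⟩
    by_cases hkl : k < w.length
    · rw [hw, List.getElem?_append_right (by omega)] at h1
      obtain ⟨s, hs⟩ : ∃ s, k - u.length = s + 1 := ⟨k - u.length - 1, by omega⟩
      rw [hs] at h1
      simp only [List.getElem?_cons_succ] at h1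
      rw [List.getElem?_replicate] at h1
      by_cases hst : s < t <;> simp [hst] at h1
    · rw [List.getElem?_eq_none (by omega)] at h1
      simp at h1

lemma exists_run (w : List Bool) (b : Bool) (hh : w.head? = some b) (hb : (!b) ∈ w) :
    ∃ m v, 1 ≤ m ∧ w = List.replicate m b ++ (!b) :: v := by
  have htw : w.takeWhile (· == b) = List.replicate (w.takeWhile (· == b)).length b := by
    apply List.eq_replicate_of_mem
    intro x hx
    simpa using List.mem_takeWhile_imp hx
  have hdne : w.dropWhile (· == b) ≠ [] := by
    intro h
    have := List.takeWhile_append_dropWhile (p := (· == b)) (l := w)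
    rw [h, List.append_nil] at this
    rw [← this, htw] at hb
    have := List.eq_of_mem_replicate hb
    cases b <;> simp at this
  have hhd : ((· == b) ((w.dropWhile (· == b)).head hdne)) = false :=
    List.head_dropWhile_not _ hdne
  have hhd' : (w.dropWhile (· == b)).head hdne = !b := by
    cases hB : (w.dropWhile (· == b)).head hdne <;> cases b <;> simp_all
  have hD : w.dropWhile (· == b) = (!b) :: (w.dropWhile (· == b)).tail := by
    rw [← hhd']; exact (List.cons_head_tail hdne).symm
  refine ⟨(w.takeWhile (· == b)).length, (w.dropWhile (· == b)).tail, ?_, ?_⟩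
  · obtain ⟨a, l, rfl⟩ : ∃ a l, w = a :: l := by
      cases w with
      | nil => simp at hh
      | cons a l => exact ⟨a, l, rfl⟩
    have : a = b := by simpa using hh
    subst this
    simp [List.takeWhile_cons]
  · conv_lhs => rw [← List.takeWhile_append_dropWhile (p := (· == b)) (l := w)]
    conv_lhs => rw [htw, hD]

lemma dyck_head {w : List Bool} (hd : IsDyckWord w) (hne : w ≠ []) : w.head? = some true := by
  obtain ⟨a, l, rfl⟩ : ∃ a l, w = a :: l := by
    cases w with
    | nil => exact absurd rfl hne
    | cons a l => exact ⟨a, l, rfl⟩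
  cases a with
  | true => rfl
  | false =>
    have := hd.2 [false] ⟨l, rfl⟩
    simp at this

lemma dyck_last {w : List Bool} (hd : IsDyckWord w) (hne : w ≠ []) :
    w.getLast? = some false := by
  rw [List.getLast?_eq_getLast hne]
  cases h : w.getLast hne with
  | false => rfl
  | true =>
    exfalso
    have hw : w = w.dropLast ++ [true] := by
      rw [← h]; exact (List.dropLast_append_getLast hne).symm
    have hp := hd.2 w.dropLast ⟨[true], hw.symm⟩
    have h1 := hd.1
    rw [hw] at h1
    simp [List.count_append] at h1
    omega

/-- Split a prefix of `replicate i true ++ X`. -/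
lemma prefix_split {p X : List Bool} {i : ℕ} (h : p <+: List.replicate i true ++ X) :
    (p = List.replicate p.length true ∧ p.length ≤ i) ∨
    (∃ q, p = List.replicate i true ++ q ∧ q <+: X) := by
  rcases le_or_gt p.length i with hle | hlt
  · left
    refine ⟨?_, hle⟩
    have hpt := List.prefix_iff_eq_take.mp h
    conv_lhs => rw [hpt]
    rw [List.take_append]
    have h1 : p.length - (List.replicate i true).length = 0 := by simp; omega
    rw [h1, List.take_zero, List.append_nil, List.take_replicate]
    congr 1
    omega
  · right
    obtain ⟨s, hs⟩ := h
    have h1 : p.take i = List.replicate i true := by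
      have h2 : (p ++ s).take i = p.take i := by
        rw [List.take_append]
        have : i - p.length = 0 := by omega
        rw [this, List.take_zero, List.append_nil]
      rw [← h2, hs, List.take_append]
      simp
    have hp : p = List.replicate i true ++ p.drop i := by
      conv_lhs => rw [← List.take_append_drop i p]
      rw [h1]
    refine ⟨p.drop i, hp, s, ?_⟩
    have : List.replicate i true ++ (p.drop i ++ s) = List.replicate i true ++ X := by
      rw [← List.append_assoc, ← hp, hs]
    exact List.append_cancel_left this

lemma headI_eq {l : List ℕ} {a : ℕ} (h : l.head? = some a) : l.headI = a := by
  cases l <;> simp_all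

/-- Characterization of membership in `DyckD n i j`. -/
lemma memA_iff {n i j : ℕ} (hn : 2 ≤ n) (hi1 : 1 ≤ i) (hi2 : i ≤ n - 1)
    (hj1 : 1 ≤ j) (w : List Bool) :
    w ∈ DyckD n i j ↔ IsDyckWord w ∧ w.count true = n ∧
      ∃ u, w = List.replicate i true ++ false :: u ++ true :: List.replicate j false := by
  constructor
  · rintro ⟨hd, hct, hhead, hlast⟩
    refine ⟨hd, hct, ?_⟩
    have hcf : w.count false = n := by rw [← hd.1, hct]
    have hfm : false ∈ w := List.count_pos_iff.mp (by omega)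
    have htm : true ∈ w := List.count_pos_iff.mp (by omega)
    have hne : w ≠ [] := by rintro rfl; simp at hfm
    -- leading run
    obtain ⟨m, v, hm, hwv⟩ := exists_run w true (dyck_head hd hne) (by simpa using hfm)
    simp only [Bool.not_true] at hwv
    have hh2 := peakHeights_head m hm v
    rw [← hwv, hhead] at hh2
    have him : i = m := by injection hh2
    subst him
    -- trailing run
    obtain ⟨t, v', ht, hrev⟩ := exists_run w.reverse false
      (by rw [List.head?_reverse]; exact dyck_last hd hne) (by simpa using htm)
    simp only [Bool.not_false] at hrev
    have hw2 : w = v'.reverse ++ true :: List.replicate t false := by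
      have := congrArg List.reverse hrev
      simpa [List.reverse_append, List.reverse_replicate] using this
    have hl2 := peakHeights_getLast t ht v'.reverse
    rw [← hw2, hlast] at hl2
    have hjv : j = v'.reverse.count true + 1 - v'.reverse.count false := by injection hl2
    simp only [List.count_reverse] at hjv
    have hctu : v'.count true + 1 = n := by
      rw [hw2] at hct
      simp [List.count_append, List.count_replicate] at hct
      omega
    have hcfu : v'.count false + t = n := by
      rw [hw2] at hcf
      simp [List.count_append, List.count_replicate] at hcf
      omega
    have hjt : j = t := by omega
    subst hjt
    -- combine
    rw [hwv] at hw2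
    rcases List.append_eq_append_iff.mp hw2 with ⟨a', hu, hb⟩ | ⟨c', ha, hd'⟩
    · cases a' with
      | nil => simp at hb
      | cons x xs =>
        obtain ⟨hx, hv⟩ : x = false ∧ v = xs ++ true :: List.replicate j false := by
          rw [List.cons_append] at hb; exact ⟨(List.cons.injEq _ _ _ _ ▸ hb).1.symm,
            (List.cons.injEq _ _ _ _ ▸ hb).2⟩
        exact ⟨xs, by simp [hwv, hv]⟩
    · exfalso
      cases c' with
      | nil =>
        rw [List.nil_append] at hd'
        simp at hd'
      | cons x xs =>
        rw [List.cons_append] at hd'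
        have hx : x = true := ((List.cons.injEq _ _ _ _ ▸ hd').1).symm
        have heq : List.replicate j false = xs ++ false :: v :=
          (List.cons.injEq _ _ _ _ ▸ hd').2
        have hxs : xs = [] := by
          cases xs with
          | nil => rfl
          | cons y ys =>
            exfalso
            have hy1 : y = true := by
              have : y ∈ List.replicate i true := by rw [ha]; simp
              exact List.eq_of_mem_replicate this
            have hy2 : y = false := by
              have : y ∈ List.replicate j false := by rw [heq]; simp
              exact List.eq_of_mem_replicate this
            rw [hy1] at hy2; exact Bool.noConfusion hy2
        subst hxs
        rw [List.nil_append] at heq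
        -- w = replicate i true ++ false :: v  with  replicate j false = false :: v
        have hvv : v = List.replicate (j - 1) false := by
          obtain ⟨j', rfl⟩ : ∃ j', j = j' + 1 := ⟨j - 1, by omega⟩
          rw [List.replicate_succ] at heq
          simpa using (List.cons.injEq _ _ _ _ ▸ heq).2.symm
        rw [hwv, hvv] at hct
        simp [List.count_append, List.count_replicate] at hct
        omega
  · rintro ⟨hd, hct, u, hw⟩
    have hcf : w.count false = n := by rw [← hd.1, hct]
    refine ⟨hd, hct, ?_, ?_⟩
    · have hw'' : w = List.replicate i true ++ false :: (u ++ true :: List.replicate j false) := by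
        simp [hw]
      rw [hw'']; exact peakHeights_head i hi1 _
    · have hw' : w = (List.replicate i true ++ false :: u) ++ true :: List.replicate j false := by
        rw [hw]
      rw [hw', peakHeights_getLast j hj1 _]
      congr 1
      have h1 : (List.replicate i true ++ false :: u).count true + 1 = n := by
        rw [hw'] at hct
        simp only [List.count_append, List.count_cons, List.count_replicate] at hct ⊢
        simp at hct ⊢
        omega
      have h2 : (List.replicate i true ++ false :: u).count false + j = n := by
        rw [hw'] at hcf
        simp only [List.count_append, List.count_cons, List.count_replicate] at hcf ⊢
        simp at hcf ⊢
        omega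
      omega

/-- Characterization of membership in the right-hand set. -/
lemma memB_iff {n i j : ℕ} (hn : 2 ≤ n) (hi1 : 1 ≤ i) (hi2 : i ≤ n - 1)
    (hj1 : 1 ≤ j) (w : List Bool) :
    (IsDyckWord w ∧ w.count true = n ∧ IsPrimitiveWord w ∧
        (peakHeights w).getLast? = some (j + 1) ∧ i ≤ (peakHeights w).headI) ↔
    (IsDyckWord w ∧ w.count true = n ∧ IsPrimitiveWord w ∧
        ∃ y, w = List.replicate i true ++ y ++ true :: List.replicate (j + 1) false) := by
  constructor
  · rintro ⟨hd, hct, hprim, hlast, hheadI⟩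
    refine ⟨hd, hct, hprim, ?_⟩
    have hcf : w.count false = n := by rw [← hd.1, hct]
    have hfm : false ∈ w := List.count_pos_iff.mp (by omega)
    have htm : true ∈ w := List.count_pos_iff.mp (by omega)
    have hne : w ≠ [] := by rintro rfl; simp at hfm
    obtain ⟨m, v, hm, hwv⟩ := exists_run w true (dyck_head hd hne) (by simpa using hfm)
    simp only [Bool.not_true] at hwv
    have hh2 := peakHeights_head m hm v
    rw [← hwv] at hh2
    have him : i ≤ m := by rw [headI_eq hh2] at hheadI; exact hheadI
    obtain ⟨t, v', ht, hrev⟩ := exists_run w.reverse false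
      (by rw [List.head?_reverse]; exact dyck_last hd hne) (by simpa using htm)
    simp only [Bool.not_false] at hrev
    have hw2 : w = v'.reverse ++ true :: List.replicate t false := by
      have := congrArg List.reverse hrev
      simpa [List.reverse_append, List.reverse_replicate] using this
    have hl2 := peakHeights_getLast t ht v'.reverse
    rw [← hw2, hlast] at hl2
    have hjv : j + 1 = v'.reverse.count true + 1 - v'.reverse.count false := by injection hl2
    simp only [List.count_reverse] at hjv
    have hctu : v'.count true + 1 = n := by
      rw [hw2] at hct
      simp [List.count_append, List.count_replicate] at hct
      omega
    have hcfu : v'.count false + t = n := by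
      rw [hw2] at hcf
      simp [List.count_append, List.count_replicate] at hcf
      omega
    have hjt : t = j + 1 := by omega
    subst hjt
    -- combine: w = replicate m true ++ false :: v, m ≥ i
    have hwv' : w = List.replicate i true ++
        (List.replicate (m - i) true ++ false :: v) := by
      rw [hwv, ← List.append_assoc, ← List.replicate_add]
      congr 2
      omega
    have heq2 : List.replicate i true ++ (List.replicate (m - i) true ++ false :: v) =
        v'.reverse ++ true :: List.replicate (j + 1) false := hwv'.symm.trans hw2
    rcases List.append_eq_append_iff.mp heq2 with ⟨a', hu, hb⟩ | ⟨c', ha, hd'⟩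
    · exact ⟨a', by rw [hw2, hu]⟩
    · cases c' with
      | nil =>
        rw [List.append_nil] at ha
        refine ⟨[], ?_⟩
        rw [hw2, ← ha]
        simp
      | cons x xs =>
        exfalso
        rw [List.cons_append] at hd'
        have heq : List.replicate (j + 1) false = xs ++ (List.replicate (m - i) true ++ false :: v) :=
          (List.cons.injEq _ _ _ _ ▸ hd').2
        have hxs : xs = [] := by
          cases xs with
          | nil => rfl
          | cons y ys =>
            exfalso
            have hy1 : y = true := by
              have : y ∈ List.replicate i true := by rw [ha]; simp
              exact List.eq_of_mem_replicate this
            have hy2 : y = false := by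
              have : y ∈ List.replicate (j + 1) false := by rw [heq]; simp
              exact List.eq_of_mem_replicate this
            rw [hy1] at hy2; exact Bool.noConfusion hy2
        subst hxs
        rw [List.nil_append] at heq
        have hmi : m - i = 0 := by
          by_contra hmi
          obtain ⟨s, hs⟩ : ∃ s, m - i = s + 1 := ⟨m - i - 1, by omega⟩
          rw [hs] at heq
          have : true ∈ List.replicate (j + 1) false := by
            rw [heq]
            simp [List.mem_append, List.mem_replicate]
          have := List.eq_of_mem_replicate this
          exact Bool.noConfusion this
        rw [hmi] at heq
        simp only [List.replicate_zero, List.nil_append] at heq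
        have hvv : v = List.replicate j false := by
          rw [List.replicate_succ] at heq
          simpa using (List.cons.injEq _ _ _ _ ▸ heq).2.symm
        have hmieq : m = i := by omega
        rw [hwv, hvv, hmieq] at hct
        simp [List.count_append, List.count_replicate] at hct
        omega
  · rintro ⟨hd, hct, hprim, y, hw⟩
    have hcf : w.count false = n := by rw [← hd.1, hct]
    refine ⟨hd, hct, hprim, ?_, ?_⟩
    · have hw' : w = (List.replicate i true ++ y) ++ true :: List.replicate (j + 1) false := by
        rw [hw, List.append_assoc]
      rw [hw', peakHeights_getLast (j+1) (by omega) _]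
      congr 1
      have h1 : (List.replicate i true ++ y).count true + 1 = n := by
        rw [hw'] at hct
        simp only [List.count_append, List.count_cons, List.count_replicate] at hct ⊢
        simp at hct ⊢
        omega
      have h2 : (List.replicate i true ++ y).count false + (j + 1) = n := by
        rw [hw'] at hcf
        simp only [List.count_append, List.count_cons, List.count_replicate] at hcf ⊢
        simp at hcf ⊢
        omega
      omega
    · -- headI ≥ i
      have hfm : false ∈ w := by
        rw [hw]; simp [List.mem_append]
      have hne : w ≠ [] := by rintro rfl; simp at hfm
      obtain ⟨m, v, hm, hwv⟩ := exists_run w true (dyck_head hd hne) (by simpa using hfm)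
      simp only [Bool.not_true] at hwv
      have hh2 := peakHeights_head m hm v
      rw [← hwv] at hh2
      rw [headI_eq hh2]
      -- show i ≤ m
      by_contra him
      push_neg at him
      -- position m of w: from hwv it's false, from hw it's true
      have h1 : w[m]? = some false := by
        rw [hwv, List.getElem?_append_right (by simp)]
        simp
      have h2 : w[m]? = some true := by
        rw [hw, List.append_assoc, List.getElem?_append, if_pos (by simp; omega)]
        simp [List.getElem?_replicate, him]
      rw [h1] at h2
      simp at h2

def phiMap (i : ℕ) (w : List Bool) : List Bool := w.take i ++ w.drop (i + 1) ++ [false]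

lemma phi_eval (i : ℕ) (z : List Bool) :
    phiMap i (List.replicate i true ++ false :: z) =
      List.replicate i true ++ z ++ [false] := by
  unfold phiMap
  have h1 : (List.replicate i true ++ false :: z).take i = List.replicate i true :=
    List.take_left' (by simp)
  have h2 : (List.replicate i true ++ false :: z).drop (i + 1) = z := by
    have hi : i + 1 = (List.replicate i true).length + 1 := by simp
    rw [hi, List.drop_append]
    simp
  rw [h1, h2]

def psiMap (i : ℕ) (v : List Bool) : List Bool :=
  v.take i ++ false :: (v.drop i).dropLast

lemma psi_phi (i : ℕ) (z : List Bool) :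
    psiMap i (List.replicate i true ++ z ++ [false]) =
      List.replicate i true ++ false :: z := by
  unfold psiMap
  have hassoc : List.replicate i true ++ z ++ [false] =
      List.replicate i true ++ (z ++ [false]) := by rw [List.append_assoc]
  rw [hassoc]
  have h1 : (List.replicate i true ++ (z ++ [false])).take i = List.replicate i true :=
    List.take_left' (by simp)
  have h2 : (List.replicate i true ++ (z ++ [false])).drop i = z ++ [false] := by
    simpa using List.drop_left (List.replicate i true) (z ++ [false])
  rw [h1, h2, List.dropLast_concat]

/-- For `n ≥ 2` and `i, j ∈ {1, …, n−1}`, `|D_n(i,j)|` equals the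
number of primitive Dyck paths of semilength `n` whose last peak has height `j+1`
and whose first peak has height at least `i`. -/
theorem dyckD_eq_primitive_count (n : ℕ) (hn : 2 ≤ n) (i j : ℕ)
    (hi : i ∈ Finset.Icc 1 (n - 1)) (hj : j ∈ Finset.Icc 1 (n - 1)) :
    (DyckD n i j).ncard =
      {w : List Bool | IsDyckWord w ∧ w.count true = n ∧ IsPrimitiveWord w ∧
        (peakHeights w).getLast? = some (j + 1) ∧ i ≤ (peakHeights w).headI}.ncard := by
  simp only [Finset.mem_Icc] at hi hj
  obtain ⟨hi1, hi2⟩ := hi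
  obtain ⟨hj1, hj2⟩ := hj
  have key : phiMap i '' (DyckD n i j) =
      {w : List Bool | IsDyckWord w ∧ w.count true = n ∧ IsPrimitiveWord w ∧
        (peakHeights w).getLast? = some (j + 1) ∧ i ≤ (peakHeights w).headI} := by
    ext v
    simp only [Set.mem_image, Set.mem_setOf_eq]
    constructor
    · rintro ⟨w, hwA, rfl⟩
      rw [memA_iff hn hi1 hi2 hj1] at hwA
      obtain ⟨hd, hct, u, hw⟩ := hwA
      set z : List Bool := u ++ true :: List.replicate j false with hz
      have hwz : w = List.replicate i true ++ false :: z := by simp [hw, hz]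
      have hphi : phiMap i w = List.replicate i true ++ z ++ [false] := by
        rw [hwz]; exact phi_eval i z
      have hcf : w.count false = n := by rw [← hd.1, hct]
      have hct' : (phiMap i w).count true = n := by
        rw [hphi]; rw [hwz] at hct
        simp only [List.count_append, List.count_cons, List.count_replicate] at hct ⊢
        simp at hct ⊢
        omega
      have hcf' : (phiMap i w).count false = n := by
        rw [hphi]; rw [hwz] at hcf
        simp only [List.count_append, List.count_cons, List.count_replicate] at hcf ⊢
        simp at hcf ⊢
        omega
      have hstrict : ∀ q, q <+: z → q.count false < i + q.count true := by
        intro q hq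
        have hpre : List.replicate i true ++ false :: q <+: w := by
          rw [hwz]
          exact (List.prefix_append_right_inj _).mpr
            (List.cons_prefix_cons.mpr ⟨rfl, hq⟩)
        have := hd.2 _ hpre
        simp only [List.count_append, List.count_cons, List.count_replicate] at this
        simp at this
        omega
      have hdyck' : IsDyckWord (phiMap i w) := by
        refine ⟨by rw [hct', hcf'], ?_⟩
        intro p hp
        rw [hphi, List.append_assoc] at hp
        rcases prefix_split hp with ⟨hpr, hpl⟩ | ⟨q, rfl, hq⟩
        · rw [hpr]; simp [List.count_replicate]
        · rcases List.prefix_concat_iff.mp hq with rfl | hqz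
          · have h1 := hstrict z (List.prefix_refl z)
            rw [hz] at h1
            simp only [hz, List.count_append, List.count_cons, List.count_replicate] at h1 ⊢
            simp at h1 ⊢
            omega
          · have := hstrict q hqz
            simp only [List.count_append, List.count_replicate]
            simp
            omega
      have hprim' : IsPrimitiveWord (phiMap i w) := by
        intro p hp hpne hpw
        rw [hphi, List.append_assoc] at hp
        rcases prefix_split hp with ⟨hpr, hpl⟩ | ⟨q, rfl, hq⟩
        · rw [hpr]
          simp [List.count_replicate]
          exact List.length_pos_iff.mpr hpne
        · rcases List.prefix_concat_iff.mp hq with rfl | hqz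
          · exact absurd (by rw [hphi, hz]; simp) hpw
          · have := hstrict q hqz
            simp only [List.count_append, List.count_replicate]
            simp
            omega
      rw [memB_iff hn hi1 hi2 hj1]
      refine ⟨hdyck', hct', hprim', u, ?_⟩
      rw [hphi, hz]
      simp [List.replicate_succ']
    · rintro hvB
      rw [memB_iff hn hi1 hi2 hj1] at hvB
      obtain ⟨hd, hct, hprim, y, hv⟩ := hvB
      set z : List Bool := y ++ true :: List.replicate j false with hz
      have hvz : v = List.replicate i true ++ (z ++ [false]) := by
        simp [hv, hz, List.replicate_succ']
      refine ⟨List.replicate i true ++ false :: z, ?_, ?_⟩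
      · rw [memA_iff hn hi1 hi2 hj1]
        have hcf : v.count false = n := by rw [← hd.1, hct]
        have hctw : (List.replicate i true ++ false :: z).count true = n := by
          rw [hvz] at hct
          simp only [List.count_append, List.count_cons, List.count_replicate] at hct ⊢
          simp at hct ⊢
          omega
        have hcfw : (List.replicate i true ++ false :: z).count false = n := by
          rw [hvz] at hcf
          simp only [List.count_append, List.count_cons, List.count_replicate] at hcf ⊢
          simp at hcf ⊢
          omega
        refine ⟨⟨by rw [hctw, hcfw], ?_⟩, hctw, y, by simp [hz]⟩
        · intro p hp
          rcases prefix_split hp with ⟨hpr, hpl⟩ | ⟨q, rfl, hq⟩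
          · rw [hpr]; simp [List.count_replicate]
          · cases q with
            | nil => simp [List.count_replicate]
            | cons b q' =>
              obtain ⟨hb, hq'⟩ := List.cons_prefix_cons.mp hq
              subst hb
              have hp' : List.replicate i true ++ q' <+: v := by
                rw [hvz]
                exact (List.prefix_append_right_inj _).mpr (hq'.trans ⟨[false], rfl⟩)
              have hne1 : List.replicate i true ++ q' ≠ [] := by
                simp
                omega
              have hne2 : List.replicate i true ++ q' ≠ v := by
                intro h
                have hlen := congrArg List.length h
                rw [hvz] at hlen
                have hql := List.IsPrefix.length_le hq'
                simp at hlen hql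
                omega
              have := hprim _ hp' hne1 hne2
              simp only [List.count_append, List.count_cons, List.count_replicate] at this ⊢
              simp at this ⊢
              omega
      · rw [phi_eval i z, List.append_assoc, ← hvz]
  have hinj : Set.InjOn (phiMap i) (DyckD n i j) := by
    intro w1 h1 w2 h2 he
    rw [memA_iff hn hi1 hi2 hj1] at h1 h2
    obtain ⟨_, _, u1, hw1⟩ := h1
    obtain ⟨_, _, u2, hw2⟩ := h2
    have e1 : psiMap i (phiMap i w1) = w1 := by
      have : w1 = List.replicate i true ++ false :: (u1 ++ true :: List.replicate j false) := by
        simp [hw1]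
      rw [this, phi_eval, psi_phi]
    have e2 : psiMap i (phiMap i w2) = w2 := by
      have : w2 = List.replicate i true ++ false :: (u2 ++ true :: List.replicate j false) := by
        simp [hw2]
      rw [this, phi_eval, psi_phi]
    rw [← e1, ← e2, he]
  rw [← key, Set.ncard_image_of_injOn hinj]
end

section
/- For every integer n ≥ 2 and all i, j ∈ {1, …, n−1}, the number of non-primitive Dyck paths of semilength n whose last peak has height j+1 and whose first peak has height at least i equals the number of Dyck paths of semilength n whose last peak has height i+j+1 (this number being zero when i+j+1 > n). -/
namespace NPT

/-- reverse-complement -/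
def rc (w : List Bool) : List Bool := (w.reverse).map (fun b => !b)

lemma not_inj : Function.Injective (fun b : Bool => !b) := by
  intro a b h; cases a <;> cases b <;> simp_all

lemma count_map_not (b : Bool) (l : List Bool) :
    (l.map (fun b => !b)).count b = l.count (!b) := by
  have := List.count_map_of_injective l (fun b => !b) not_inj (!b)
  simpa using this

lemma ct_rc (w : List Bool) : (rc w).count true = w.count false := by
  rw [rc, count_map_not, List.count_reverse]; rfl

lemma cf_rc (w : List Bool) : (rc w).count false = w.count true := by
  rw [rc, count_map_not, List.count_reverse]; rfl

lemma length_rc (w : List Bool) : (rc w).length = w.length := by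
  simp [rc]

lemma rc_rc (w : List Bool) : rc (rc w) = w := by
  simp [rc, ← List.map_reverse, List.map_map, Function.comp_def]

lemma take_rc (w : List Bool) (m : ℕ) :
    (rc w).take m = rc (w.drop (w.length - m)) := by
  rw [rc, ← List.map_take, List.take_reverse, rc]

lemma count_split (b : Bool) (l : List Bool) (m : ℕ) :
    (l.take m).count b + (l.drop m).count b = l.count b := by
  rw [← List.count_append, List.take_append_drop]

lemma count_take_succ_le (b : Bool) (l : List Bool) (m : ℕ) :
    (l.take (m+1)).count b ≤ (l.take m).count b + 1 ∧
      (l.take m).count b ≤ (l.take (m+1)).count b := by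
  rw [List.take_add, List.count_append]
  have h1 : ((l.drop m).take 1).count b ≤ 1 := by
    calc ((l.drop m).take 1).count b ≤ ((l.drop m).take 1).length := List.count_le_length
    _ ≤ 1 := by rw [List.length_take]; omega
  omega

/-- dominated (Dyck prefix condition) -/
def Dom (u : List Bool) : Prop := ∀ p, p <+: u → p.count false ≤ p.count true

lemma dom_iff_take (u : List Bool) :
    Dom u ↔ ∀ m, (u.take m).count false ≤ (u.take m).count true := by
  constructor
  · intro h m; exact h _ (List.take_prefix m u)
  · intro h p hp
    rw [List.prefix_iff_eq_take] at hp
    rw [hp]; exact h _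

end NPT
namespace NPT

def pk (w : List Bool) (k : ℕ) : Option ℕ :=
  if w[k]? = some true ∧ w[k + 1]? = some false then
    some ((w.take (k + 1)).count true - (w.take (k + 1)).count false)
  else none

lemma peakHeights_eq (w : List Bool) :
    peakHeights w = (List.range w.length).filterMap (pk w) := rfl

lemma peakHeights_concat (u : List Bool) (K : ℕ) (hK : 1 ≤ K) :
    peakHeights (u ++ true :: List.replicate K false) =
      (List.range u.length).filterMap (pk (u ++ true :: List.replicate K false))
        ++ [u.count true + 1 - u.count false] := by
  set w := u ++ true :: List.replicate K false with hw
  have hlen : w.length = (u.length + 1) + K := by simp [hw]; omega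
  rw [peakHeights_eq, hlen, List.range_add, List.filterMap_append, List.filterMap_map]
  have h2 : (List.range K).filterMap (pk w ∘ fun x => u.length + 1 + x) = [] := by
    rw [List.filterMap_eq_nil_iff]
    intro m hm
    rw [List.mem_range] at hm
    have : w[u.length + 1 + m]? = some false := by
      rw [hw, List.getElem?_append_right (by omega)]
      have : u.length + 1 + m - u.length = m + 1 := by omega
      rw [this]
      simp [List.getElem?_replicate, hm]
    simp [Function.comp, pk, this]
  rw [h2, List.append_nil, List.range_succ, List.filterMap_append]
  congr 1
  have ht : w[u.length]? = some true := by
    rw [hw, List.getElem?_append_right (le_refl _)]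
    simp
  have hf : w[u.length + 1]? = some false := by
    rw [hw, List.getElem?_append_right (by omega)]
    have : u.length + 1 - u.length = 1 := by omega
    rw [this]
    simp [List.getElem?_replicate]
    omega
  have htake : w.take (u.length + 1) = u ++ [true] := by
    rw [hw, List.take_append]
    simp [List.take_cons]
  simp [pk, ht, hf, htake]

lemma getLast_peak (u : List Bool) (K : ℕ) (hK : 1 ≤ K) :
    (peakHeights (u ++ true :: List.replicate K false)).getLast? =
      some (u.count true + 1 - u.count false) := by
  rw [peakHeights_concat u K hK, List.getLast?_concat]

lemma head_peak (a : ℕ) (ha : 1 ≤ a) (rest : List Bool) :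
    (peakHeights (List.replicate a true ++ false :: rest)).headI = a := by
  obtain ⟨b, rfl⟩ : ∃ b, a = b + 1 := ⟨a - 1, by omega⟩
  set w := List.replicate (b+1) true ++ false :: rest with hw
  have hlen : w.length = (b + 1) + (1 + rest.length) := by simp [hw]; omega
  rw [peakHeights_eq, hlen, List.range_add, List.filterMap_append]
  have h1 : (List.range (b+1)).filterMap (pk w) = [b + 1] := by
    rw [List.range_succ, List.filterMap_append]
    have hz : (List.range b).filterMap (pk w) = [] := by
      rw [List.filterMap_eq_nil_iff]
      intro m hm
      rw [List.mem_range] at hm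
      have : w[m + 1]? = some true := by
        rw [hw, List.getElem?_append_left (by simp; omega)]
        simp [List.getElem?_replicate]; omega
      simp [pk, this]
    rw [hz, List.nil_append]
    have ht : w[b]? = some true := by
      rw [hw, List.getElem?_append_left (by simp)]
      simp [List.getElem?_replicate]
    have hf : w[b + 1]? = some false := by
      rw [hw, List.getElem?_append_right (by simp)]
      simp
    have htake : w.take (b + 1) = List.replicate (b+1) true := by
      rw [hw, List.take_append]
      simp
    simp [pk, ht, hf, htake, List.count_replicate]
  rw [h1]
  rfl

end NPT
namespace NPT

lemma decomp (w : List Bool) (hd : ∀ p, p <+: w → p.count false ≤ p.count true)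
    (he : w.count true = w.count false) (hn : 1 ≤ w.count true) :
    ∃ u K, 1 ≤ K ∧ w = u ++ true :: List.replicate K false := by
  set r := w.reverse with hr
  set tk := r.takeWhile (fun b => !b) with htk
  set dp := r.dropWhile (fun b => !b) with hdp
  have htkr : tk = List.replicate tk.length false := by
    apply List.eq_replicate_of_mem
    intro b hb
    have := List.mem_takeWhile_imp hb
    simpa using this
  have hdpne : dp ≠ [] := by
    intro h
    have hrtk : r = tk := by rw [← List.takeWhile_append_dropWhile (p := fun b => !b) (l := r), ← htk, ← hdp, h, List.append_nil]
    have : r.count true = 0 := by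
      rw [hrtk, htkr, List.count_replicate]; simp
    rw [hr, List.count_reverse] at this
    omega
  have hhead : dp.head hdpne = true := by
    have := List.head_dropWhile_not (fun b => !b) (l := r) hdpne
    simpa using this
  have hdpc : dp = true :: dp.tail := by
    conv_lhs => rw [← List.cons_head_tail hdpne, hhead]
  have hrw : r = List.replicate tk.length false ++ true :: dp.tail := by
    conv_lhs => rw [← List.takeWhile_append_dropWhile (p := fun b => !b) (l := r), ← htk, ← hdp, htkr, hdpc]
  have hwrw : w = dp.tail.reverse ++ true :: List.replicate tk.length false := by
    have : w = r.reverse := by rw [hr, List.reverse_reverse]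
    rw [this, hrw]
    simp [List.reverse_append]
  refine ⟨dp.tail.reverse, tk.length, ?_, hwrw⟩
  by_contra h
  have h0 : tk.length = 0 := by omega
  rw [h0] at hwrw
  simp only [List.replicate_zero] at hwrw
  have hpre : dp.tail.reverse <+: w := by rw [hwrw]; exact List.prefix_append _ _
  have h1 := hd _ hpre
  have hct : w.count true = dp.tail.reverse.count true + 1 := by
    rw [hwrw]; simp
  have hcf : w.count false = dp.tail.reverse.count false := by
    rw [hwrw]; simp
  omega

lemma leadrun (w : List Bool) (hf : false ∈ w) :
    ∃ a rest, w = List.replicate a true ++ false :: rest ∧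
      ∀ i, List.replicate i true <+: w → i ≤ a := by
  set tk := w.takeWhile (fun b => b) with htk
  set dp := w.dropWhile (fun b => b) with hdp
  have htkr : tk = List.replicate tk.length true := by
    apply List.eq_replicate_of_mem
    intro b hb
    simpa using List.mem_takeWhile_imp hb
  have hdpne : dp ≠ [] := by
    intro h
    have hrtk : w = tk := by rw [← List.takeWhile_append_dropWhile (p := fun b => b) (l := w), ← htk, ← hdp, h, List.append_nil]
    rw [hrtk, htkr] at hf
    exact absurd (List.eq_of_mem_replicate hf) (by simp)
  have hhead : dp.head hdpne = false := by
    have := List.head_dropWhile_not (fun b => b) (l := w) hdpne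
    simpa using this
  have hdpc : dp = false :: dp.tail := by
    conv_lhs => rw [← List.cons_head_tail hdpne, hhead]
  have hwrw : w = List.replicate tk.length true ++ false :: dp.tail := by
    conv_lhs => rw [← List.takeWhile_append_dropWhile (p := fun b => b) (l := w), ← htk, ← hdp, htkr, hdpc]
  refine ⟨tk.length, dp.tail, hwrw, ?_⟩
  intro i hi
  by_contra h
  push_neg at h
  set a := tk.length
  have h1 : List.replicate (a + 1) true <+: List.replicate i true := by
    rw [List.prefix_iff_eq_take, List.take_replicate, List.length_replicate]
    congr 1
    omega
  have h2 : List.replicate (a + 1) true <+: w := h1.trans hi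
  rw [List.prefix_iff_eq_take, List.length_replicate] at h2
  have h3 : w[a]? = some true := by
    have : w[a]? = (w.take (a + 1))[a]? := by
      rw [List.getElem?_take]; simp
    rw [this, ← h2, List.getElem?_replicate]
    simp
  have h4 : w[a]? = some false := by
    rw [hwrw, List.getElem?_append_right (by simp)]
    simp
  rw [h3] at h4
  simp at h4

end NPT
namespace NPT

lemma tct (K s : ℕ) : ((true :: List.replicate K false).take s).count true = min s 1 := by
  cases s with
  | zero => simp
  | succ t => simp [List.take_succ_cons, List.count_cons, List.take_replicate, List.count_replicate]

lemma tcf (K s : ℕ) : ((true :: List.replicate K false).take s).count false = min (s - 1) K := by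
  cases s with
  | zero => simp
  | succ t => simp [List.take_succ_cons, List.count_cons, List.take_replicate, List.count_replicate]

lemma wct (u : List Bool) (K : ℕ) :
    (u ++ true :: List.replicate K false).count true = u.count true + 1 := by
  simp [List.count_append, List.count_cons, List.count_replicate]

lemma wcf (u : List Bool) (K : ℕ) :
    (u ++ true :: List.replicate K false).count false = u.count false + K := by
  simp [List.count_append, List.count_cons, List.count_replicate]

def U (n c : ℕ) : Set (List Bool) :=
  {u | Dom u ∧ u.count true + 1 = n ∧ u.count false + c = n}

def U1 (n i j : ℕ) : Set (List Bool) :=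
  {u | Dom u ∧ u.count true + 1 = n ∧ u.count false + (j + 1) = n ∧
    List.replicate i true <+: u ∧
    ∃ p, p <+: u ∧ p ≠ [] ∧ p.count false = p.count true}

lemma dyck_append (u : List Bool) (K n : ℕ) (hK : 1 ≤ K) (hd : Dom u)
    (h1 : u.count true + 1 = n) (h2 : u.count false + K = n) :
    IsDyckWord (u ++ true :: List.replicate K false) := by
  constructor
  · rw [wct, wcf]; omega
  · intro p hp
    rw [List.prefix_iff_eq_take] at hp
    rw [hp, List.take_append, List.count_append, List.count_append, tct, tcf]
    by_cases hm : p.length ≤ u.length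
    · have h0 : p.length - u.length = 0 := by omega
      rw [h0]
      have := (dom_iff_take u).1 hd p.length
      omega
    · rw [List.take_of_length_le (by omega)]
      have hb1 : min (p.length - u.length - 1) K ≤ K := min_le_right _ _
      omega

lemma RHS_eq (n K : ℕ) (hn : 1 ≤ n) (hK : 1 ≤ K) :
    {w : List Bool | IsDyckWord w ∧ w.count true = n ∧ (peakHeights w).getLast? = some K}
      = (fun u => u ++ true :: List.replicate K false) '' (U n K) := by
  ext w
  constructor
  · rintro ⟨⟨he, hdw⟩, hcnt, hlast⟩
    obtain ⟨u, K', hK', rfl⟩ := decomp w hdw he (by omega)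
    have hct := wct u K'
    have hcf := wcf u K'
    rw [getLast_peak u K' hK'] at hlast
    have hKv := Option.some.inj hlast
    have hKK : K' = K := by omega
    subst hKK
    refine ⟨u, ⟨?_, by omega, by omega⟩, rfl⟩
    intro p hp
    exact hdw p (hp.trans (List.prefix_append _ _))
  · rintro ⟨u, ⟨hd, h1, h2⟩, rfl⟩
    refine ⟨dyck_append u K n hK hd h1 h2, ?_, ?_⟩
    · rw [wct]; omega
    · rw [getLast_peak u K hK]
      congr 1
      omega

lemma LHS_eq (n i j : ℕ) (hn : 2 ≤ n) (hi : 1 ≤ i) (hi' : i ≤ n - 1) (hj : 1 ≤ j) :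
    {w : List Bool | IsDyckWord w ∧ w.count true = n ∧ ¬ IsPrimitiveWord w ∧
        (peakHeights w).getLast? = some (j + 1) ∧ i ≤ (peakHeights w).headI}
      = (fun u => u ++ true :: List.replicate (j + 1) false) '' (U1 n i j) := by
  ext w
  constructor
  · rintro ⟨⟨he, hdw⟩, hcnt, hnp, hlast, hhead⟩
    obtain ⟨u, K', hK', rfl⟩ := decomp w hdw he (by omega)
    have hct := wct u K'
    have hcf := wcf u K'
    rw [getLast_peak u K' hK'] at hlast
    have hKv := Option.some.inj hlast
    have hKK : K' = j + 1 := by omega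
    subst hKK
    have hfmem : false ∈ (u ++ true :: List.replicate (j + 1) false) := by
      refine List.mem_append.2 (Or.inr ?_)
      simp
    obtain ⟨a, rest, hwa, hmax⟩ := leadrun _ hfmem
    have ha1 : 1 ≤ a := by
      by_contra h
      have ha0 : a = 0 := by omega
      have hpf : [false] <+: (u ++ true :: List.replicate (j + 1) false) := by
        rw [hwa, ha0]
        exact ⟨rest, rfl⟩
      have := hdw _ hpf
      simp at this
    have hha : (peakHeights (u ++ true :: List.replicate (j + 1) false)).headI = a := by
      rw [hwa]; exact head_peak a ha1 rest
    rw [hha] at hhead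
    refine ⟨u, ⟨?_, by omega, by omega, ?_, ?_⟩, rfl⟩
    · intro p hp
      exact hdw p (hp.trans (List.prefix_append _ _))
    · -- replicate i true <+: u
      have hrw : List.replicate i true <+: (u ++ true :: List.replicate (j + 1) false) := by
        have h1 : List.replicate i true = (List.replicate a true).take i := by
          rw [List.take_replicate]
          congr 1
          omega
        rw [h1, hwa]
        exact (List.take_prefix _ _).trans (List.prefix_append _ _)
      have hlu : i ≤ u.length := by
        have := List.count_le_length (a := true) (l := u)
        omega
      rw [List.prefix_iff_eq_take, List.length_replicate] at hrw ⊢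
      rw [hrw, List.take_append]
      have h0 : i - u.length = 0 := by omega
      rw [h0]
      simp
    · -- balanced prefix from ¬Prim
      rw [IsPrimitiveWord] at hnp
      push_neg at hnp
      obtain ⟨p, hp, hpne, hpw, hple⟩ := hnp
      have hdom := hdw p hp
      have hbal : p.count false = p.count true := by omega
      have hplen : p.length ≤ u.length := by
        by_contra h
        push_neg at h
        have hpt : p = (u ++ true :: List.replicate (j + 1) false).take p.length :=
          List.prefix_iff_eq_take.1 hp
        rw [List.take_append, List.take_of_length_le (by omega)] at hpt
        have hc1 := congrArg (List.count true) hpt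
        have hc2 := congrArg (List.count false) hpt
        rw [List.count_append, tct] at hc1
        rw [List.count_append, tcf] at hc2
        have hplw : p.length = (u ++ true :: List.replicate (j + 1) false).length := by
          have hle := hp.length_le
          simp only [List.length_append, List.length_cons, List.length_replicate] at hle ⊢
          omega
        exact hpw (hp.eq_of_length hplw)
      refine ⟨p, ?_, hpne, hbal⟩
      rw [List.prefix_iff_eq_take] at hp ⊢
      rw [hp, List.take_append]
      have h0 : p.length - u.length = 0 := by omega
      rw [h0]
      simp
  · rintro ⟨u, ⟨hd, h1, h2, hrep, p, hp, hpne, hbal⟩, rfl⟩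
    have hK : 1 ≤ j + 1 := by omega
    have hdy := dyck_append u (j + 1) n hK hd h1 h2
    refine ⟨hdy, by rw [wct]; omega, ?_, ?_, ?_⟩
    · intro hP
      have hpw : p <+: (u ++ true :: List.replicate (j + 1) false) :=
        hp.trans (List.prefix_append _ _)
      have hpnew : p ≠ u ++ true :: List.replicate (j + 1) false := by
        intro h
        have hle : p.length ≤ u.length := hp.length_le
        rw [h] at hle
        simp at hle
      have := hP p hpw hpne hpnew
      omega
    · rw [getLast_peak u (j + 1) hK]
      congr 1
      omega
    · have hfmem : false ∈ (u ++ true :: List.replicate (j + 1) false) := by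
        refine List.mem_append.2 (Or.inr ?_)
        simp
      obtain ⟨a, rest, hwa, hmax⟩ := leadrun _ hfmem
      have hia : i ≤ a := hmax i (hrep.trans (List.prefix_append _ _))
      show i ≤ (peakHeights (u ++ true :: List.replicate (j + 1) false)).headI
      rw [hwa, head_peak a (by omega) rest]
      exact hia

end NPT
namespace NPT

def S1 (i : ℕ) (v : List Bool) : Finset ℕ :=
  (Finset.range (v.length + 1)).filter
    (fun m => (v.take m).count false = (v.take m).count true + i)

def S2 (i : ℕ) (w : List Bool) : Finset ℕ :=
  (Finset.range (w.length + 1)).filter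
    (fun m => (w.take m).count true ≤ (w.take m).count false + i)

lemma mem_S1 {i : ℕ} {v : List Bool} {m : ℕ} :
    m ∈ S1 i v ↔ m ≤ v.length ∧ (v.take m).count false = (v.take m).count true + i := by
  simp [S1, Nat.lt_succ_iff]

lemma mem_S2 {i : ℕ} {w : List Bool} {m : ℕ} :
    m ∈ S2 i w ↔ m ≤ w.length ∧ (w.take m).count true ≤ (w.take m).count false + i := by
  simp [S2, Nat.lt_succ_iff]

def phi (i : ℕ) (u : List Bool) : List Bool :=
  if h : (S1 i (u.drop i)).Nonempty then
    rc ((u.drop i).take ((S1 i (u.drop i)).max' h)) ++ (u.drop i).drop ((S1 i (u.drop i)).max' h)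
  else u

def psi (i : ℕ) (w : List Bool) : List Bool :=
  if h : (S2 i w).Nonempty then
    List.replicate i true ++ rc (w.take ((S2 i w).max' h)) ++ w.drop ((S2 i w).max' h)
  else w

lemma phi_eval (i : ℕ) (A B : List Bool) (u : List Bool) (hu : u.drop i = A ++ B)
    (hA : A.length ∈ S1 i (A ++ B)) (hmax : ∀ m ∈ S1 i (A ++ B), m ≤ A.length) :
    phi i u = rc A ++ B := by
  unfold phi
  rw [hu]
  have hne : (S1 i (A ++ B)).Nonempty := ⟨A.length, hA⟩
  rw [dif_pos hne]
  have hM : (S1 i (A ++ B)).max' hne = A.length :=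
    le_antisymm (Finset.max'_le _ _ _ hmax) (Finset.le_max' _ _ hA)
  rw [hM, List.take_left, List.drop_left]

lemma psi_eval (i : ℕ) (A B : List Bool) (w : List Bool) (hw : w = A ++ B)
    (hA : A.length ∈ S2 i (A ++ B)) (hmax : ∀ m ∈ S2 i (A ++ B), m ≤ A.length) :
    psi i w = List.replicate i true ++ rc A ++ B := by
  subst hw
  unfold psi
  have hne : (S2 i (A ++ B)).Nonempty := ⟨A.length, hA⟩
  rw [dif_pos hne]
  have hM : (S2 i (A ++ B)).max' hne = A.length :=
    le_antisymm (Finset.max'_le _ _ _ hmax) (Finset.le_max' _ _ hA)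
  rw [hM, List.take_left, List.drop_left]

end NPT
namespace NPT

lemma phi_spec {n i j : ℕ} (hi : 1 ≤ i) {u : List Bool} (hu : u ∈ U1 n i j) :
    ∃ A B : List Bool,
      u = List.replicate i true ++ (A ++ B) ∧
      phi i u = rc A ++ B ∧
      A.count false = A.count true + i ∧
      (∀ m, (A.take m).count false ≤ (A.take m).count true + i) ∧
      (∀ m, 1 ≤ m → m ≤ B.length → (B.take m).count false < (B.take m).count true) := by
  obtain ⟨hd, h1, h2, hrep, p, hp, hpne, hbal⟩ := hu
  have hrept : List.replicate i true = u.take i := by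
    have := List.prefix_iff_eq_take.1 hrep
    simpa using this
  have huv : u = List.replicate i true ++ u.drop i := by
    conv_lhs => rw [← List.take_append_drop i u, ← hrept]
  set v := u.drop i with hv
  have htake : ∀ m, u.take (i + m) = List.replicate i true ++ v.take m := by
    intro m
    conv_lhs => rw [huv]
    rw [List.take_append, List.take_of_length_le (by simp)]
    congr 2
    simp
  have hcf_take : ∀ m, (u.take (i + m)).count false = (v.take m).count false := by
    intro m; rw [htake m]; simp [List.count_append, List.count_replicate]
  have hct_take : ∀ m, (u.take (i + m)).count true = i + (v.take m).count true := by
    intro m; rw [htake m]; simp [List.count_append, List.count_replicate]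
  -- S1 is nonempty
  have hplen : i < p.length := by
    by_contra hh
    push_neg at hh
    have hpt : p = u.take p.length := List.prefix_iff_eq_take.1 hp
    rw [huv, List.take_append, List.take_replicate] at hpt
    have h0 : p.length - (List.replicate i true).length = 0 := by simp; omega
    rw [h0] at hpt
    simp only [List.take_zero, List.append_nil] at hpt
    have hc1 := congrArg (List.count false) hpt
    have hc2 := congrArg (List.count true) hpt
    rw [List.count_replicate] at hc1 hc2
    simp at hc1 hc2
    have : p.length = 0 := by omega
    exact hpne (List.length_eq_zero_iff.1 this)
  have hm0 : (p.length - i) ∈ S1 i v := by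
    rw [mem_S1]
    constructor
    · have := hp.length_le
      have hlv : v.length = u.length - i := List.length_drop (i := i) (l := u)
      omega
    · have hpl : i + (p.length - i) = p.length := by omega
      have hpt : p = u.take p.length := List.prefix_iff_eq_take.1 hp
      have e1 := hcf_take (p.length - i)
      have e2 := hct_take (p.length - i)
      rw [hpl, ← hpt] at e1 e2
      omega
  have hne : (S1 i v).Nonempty := ⟨p.length - i, hm0⟩
  set M := (S1 i v).max' hne with hM
  have hMmem := Finset.max'_mem (S1 i v) hne
  rw [← hM, mem_S1] at hMmem
  obtain ⟨hMle, hMeq⟩ := hMmem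
  refine ⟨v.take M, v.drop M, ?_, ?_, hMeq, ?_, ?_⟩
  · rw [List.take_append_drop, ← huv]
  · apply phi_eval i (v.take M) (v.drop M) u
    · rw [← hv, List.take_append_drop]
    · rw [List.take_append_drop]
      have : (v.take M).length = M := by rw [List.length_take]; omega
      rw [this, mem_S1]
      exact ⟨hMle, hMeq⟩
    · intro m hm
      rw [List.take_append_drop] at hm
      have : (v.take M).length = M := by rw [List.length_take]; omega
      rw [this]
      exact Finset.le_max' _ _ hm
  · intro m
    rw [List.take_take]
    have hdm := (dom_iff_take u).1 hd (i + min m M)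
    rw [hcf_take, hct_take] at hdm
    omega
  · intro m hm1 hm2
    have hsplit : v.take (M + m) = v.take M ++ (v.drop M).take m := List.take_add (l := v) (i := M) (j := m)
    have hdm := (dom_iff_take u).1 hd (i + (M + m))
    rw [hcf_take, hct_take, hsplit, List.count_append, List.count_append] at hdm
    have hle : ((v.drop M).take m).count false ≤ ((v.drop M).take m).count true := by omega
    rcases lt_or_eq_of_le hle with h | h
    · exact h
    · exfalso
      have hmem : (M + m) ∈ S1 i v := by
        rw [mem_S1]
        constructor
        · have := List.length_drop (i := M) (l := v)
          omega
        · rw [hsplit, List.count_append, List.count_append]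
          omega
      have := Finset.le_max' _ _ hmem
      rw [← hM] at this
      omega

lemma psi_spec {n i j : ℕ} (hi : 1 ≤ i) (hj : 1 ≤ j) {w : List Bool}
    (hw : w ∈ U n (i + j + 1)) :
    ∃ A B : List Bool,
      w = A ++ B ∧
      psi i w = List.replicate i true ++ rc A ++ B ∧
      A.count true = A.count false + i ∧
      (∀ m, (A.take m).count false ≤ (A.take m).count true) ∧
      (∀ m, 1 ≤ m → m ≤ B.length → (B.take m).count false < (B.take m).count true) := by
  obtain ⟨hd, h1, h2⟩ := hw
  have hne : (S2 i w).Nonempty := ⟨0, by rw [mem_S2]; simp⟩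
  set M := (S2 i w).max' hne with hM
  have hMmem := Finset.max'_mem (S2 i w) hne
  rw [← hM, mem_S2] at hMmem
  obtain ⟨hMle, hMcond⟩ := hMmem
  have hctw : w.count true = w.count false + i + j := by omega
  have hMlt : M < w.length := by
    rcases lt_or_eq_of_le hMle with h | h
    · exact h
    · exfalso
      rw [h, List.take_of_length_le (le_refl _)] at hMcond
      omega
  have hMeq : (w.take M).count true = (w.take M).count false + i := by
    have hnotmem : (M + 1) ∉ S2 i w := by
      intro hmem
      have := Finset.le_max' _ _ hmem
      omega
    rw [mem_S2] at hnotmem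
    push_neg at hnotmem
    have hstrict := hnotmem (by omega)
    have e1 := count_take_succ_le true w M
    have e2 := count_take_succ_le false w M
    omega
  refine ⟨w.take M, w.drop M, (List.take_append_drop M w).symm, ?_, hMeq, ?_, ?_⟩
  · apply psi_eval i (w.take M) (w.drop M) w (List.take_append_drop M w).symm
    · rw [List.take_append_drop]
      have : (w.take M).length = M := by rw [List.length_take]; omega
      rw [this, mem_S2]
      exact ⟨hMle, le_of_eq hMeq⟩
    · intro m hm
      rw [List.take_append_drop] at hm
      have : (w.take M).length = M := by rw [List.length_take]; omega
      rw [this]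
      exact Finset.le_max' _ _ hm
  · intro m
    rw [List.take_take]
    exact (dom_iff_take w).1 hd (min m M)
  · intro m hm1 hm2
    have hsplit : w.take (M + m) = w.take M ++ (w.drop M).take m := List.take_add (l := w) (i := M) (j := m)
    have hnotmem : (M + m) ∉ S2 i w := by
      intro hmem
      have := Finset.le_max' _ _ hmem
      omega
    rw [mem_S2] at hnotmem
    push_neg at hnotmem
    have hlen : M + m ≤ w.length := by
      have := List.length_drop (i := M) (l := w)
      omega
    have hstrict := hnotmem hlen
    rw [hsplit, List.count_append, List.count_append] at hstrict
    omega

end NPT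
namespace NPT

lemma ball_of_strict {B : List Bool}
    (h : ∀ m, 1 ≤ m → m ≤ B.length → (B.take m).count false < (B.take m).count true) :
    ∀ s, (B.take s).count false ≤ (B.take s).count true := by
  intro s
  rcases Nat.eq_zero_or_pos s with h0 | h1
  · subst h0; simp
  · by_cases hs : s ≤ B.length
    · exact le_of_lt (h s h1 hs)
    · rw [List.take_of_length_le (by omega)]
      rcases Nat.eq_zero_or_pos B.length with hb | hb
      · rw [List.length_eq_zero_iff.1 hb]; simp
      · have := h B.length hb (le_refl _)
        rw [List.take_of_length_le (le_refl _)] at this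
        omega

lemma mapsTo_phi {n i j : ℕ} (hi : 1 ≤ i) (hj : 1 ≤ j) :
    Set.MapsTo (phi i) (U1 n i j) (U n (i + j + 1)) := by
  intro u hu
  obtain ⟨A, B, huv, hphi, hAeq, hAd, hBs⟩ := phi_spec hi hu
  obtain ⟨hd, h1, h2, -, -⟩ := hu
  have hBall := ball_of_strict hBs
  have hct_u : u.count true = i + A.count true + B.count true := by
    rw [huv]; simp [List.count_append, List.count_replicate]; omega
  have hcf_u : u.count false = A.count false + B.count false := by
    rw [huv]; simp [List.count_append, List.count_replicate]
  refine ⟨?_, ?_, ?_⟩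
  · show Dom (phi i u)
    rw [hphi, dom_iff_take]
    intro m
    rw [List.take_append, List.count_append, List.count_append]
    by_cases hm : m ≤ A.length
    · have h0 : m - (rc A).length = 0 := by rw [length_rc]; omega
      rw [h0]
      simp only [List.take_zero, List.count_nil]
      rw [take_rc, cf_rc, ct_rc]
      have e1 := count_split true A (A.length - m)
      have e2 := count_split false A (A.length - m)
      have e3 := hAd (A.length - m)
      omega
    · rw [List.take_of_length_le (by rw [length_rc]; omega)]
      rw [cf_rc, ct_rc]
      have := hBall (m - (rc A).length)
      omega
  · show (phi i u).count true + 1 = n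
    rw [hphi, List.count_append, ct_rc]
    omega
  · show (phi i u).count false + (i + j + 1) = n
    rw [hphi, List.count_append, cf_rc]
    omega

lemma mapsTo_psi {n i j : ℕ} (hi : 1 ≤ i) (hj : 1 ≤ j) :
    Set.MapsTo (psi i) (U n (i + j + 1)) (U1 n i j) := by
  intro w hw
  obtain ⟨A, B, hwAB, hpsi, hAeq, hAd, hBs⟩ := psi_spec hi hj hw
  obtain ⟨hd, h1, h2⟩ := hw
  have hBall := ball_of_strict hBs
  have hct_w : w.count true = A.count true + B.count true := by
    rw [hwAB]; simp [List.count_append]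
  have hcf_w : w.count false = A.count false + B.count false := by
    rw [hwAB]; simp [List.count_append]
  have hX : ∀ s, ((rc A ++ B).take s).count false ≤ ((rc A ++ B).take s).count true + i := by
    intro s
    rw [List.take_append, List.count_append, List.count_append]
    by_cases hs : s ≤ A.length
    · have h0 : s - (rc A).length = 0 := by rw [length_rc]; omega
      rw [h0]
      simp only [List.take_zero, List.count_nil]
      rw [take_rc, cf_rc, ct_rc]
      have e1 := count_split true A (A.length - s)
      have e2 := count_split false A (A.length - s)
      have e3 := hAd (A.length - s)
      omega
    · rw [List.take_of_length_le (by rw [length_rc]; omega)]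
      rw [cf_rc, ct_rc]
      have := hBall (s - (rc A).length)
      omega
  refine ⟨?_, ?_, ?_, ?_, ?_⟩
  · show Dom (psi i w)
    rw [hpsi, dom_iff_take, List.append_assoc]
    intro m
    rw [List.take_append, List.count_append, List.count_append,
      List.length_replicate, List.take_replicate]
    have e1 : (List.replicate (min m i) (true : Bool)).count false = 0 := by simp [List.count_replicate]
    have e2 : (List.replicate (min m i) (true : Bool)).count true = min m i := by simp [List.count_replicate]
    rw [e1, e2]
    by_cases hm : m ≤ i
    · rw [show m - i = 0 by omega]
      simp
    · have hXm := hX (m - i)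
      omega
  · show (psi i w).count true + 1 = n
    rw [hpsi]
    simp only [List.count_append, List.count_replicate, ct_rc, cf_rc]
    simp
    omega
  · show (psi i w).count false + (j + 1) = n
    rw [hpsi]
    simp only [List.count_append, List.count_replicate, ct_rc, cf_rc]
    simp
    omega
  · show List.replicate i true <+: psi i w
    rw [hpsi]
    exact (List.prefix_append _ _).trans (List.prefix_append _ _)
  · refine ⟨List.replicate i true ++ rc A, ?_, ?_, ?_⟩
    · rw [hpsi]
      exact List.prefix_append _ _
    · intro h
      have := congrArg List.length h
      simp at this
      omega
    · simp [List.count_append, List.count_replicate, ct_rc, cf_rc]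
      omega

lemma left_inv {n i j : ℕ} (hi : 1 ≤ i) {u : List Bool} (hu : u ∈ U1 n i j) :
    psi i (phi i u) = u := by
  obtain ⟨A, B, huv, hphi, hAeq, hAd, hBs⟩ := phi_spec hi hu
  rw [hphi]
  have heval : psi i (rc A ++ B) = List.replicate i true ++ rc (rc A) ++ B := by
    apply psi_eval i (rc A) B _ rfl
    · rw [mem_S2, List.take_left, ct_rc, cf_rc]
      constructor
      · simp
      · omega
    · intro m hm
      rw [mem_S2] at hm
      obtain ⟨hm1, hm2⟩ := hm
      by_contra hcon
      push_neg at hcon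
      rw [List.take_append, List.take_of_length_le (by omega),
        List.count_append, List.count_append, ct_rc, cf_rc] at hm2
      have hs1 : 1 ≤ m - (rc A).length := by omega
      have hs2 : m - (rc A).length ≤ B.length := by
        rw [List.length_append] at hm1
        omega
      have := hBs _ hs1 hs2
      omega
  rw [heval, rc_rc, List.append_assoc, ← huv]

lemma right_inv {n i j : ℕ} (hi : 1 ≤ i) (hj : 1 ≤ j) {w : List Bool}
    (hw : w ∈ U n (i + j + 1)) : phi i (psi i w) = w := by
  obtain ⟨A, B, hwAB, hpsi, hAeq, hAd, hBs⟩ := psi_spec hi hj hw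
  rw [hpsi]
  have hdrop : (List.replicate i true ++ rc A ++ B).drop i = rc A ++ B := by
    rw [List.append_assoc]
    have h := List.drop_left (l₁ := List.replicate i true) (l₂ := rc A ++ B)
    rw [List.length_replicate] at h
    exact h
  have heval : phi i (List.replicate i true ++ rc A ++ B) = rc (rc A) ++ B := by
    apply phi_eval i (rc A) B _ hdrop
    · rw [mem_S1, List.take_left, ct_rc, cf_rc]
      constructor
      · simp
      · omega
    · intro m hm
      rw [mem_S1] at hm
      obtain ⟨hm1, hm2⟩ := hm
      by_contra hcon
      push_neg at hcon
      rw [List.take_append, List.take_of_length_le (by omega),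
        List.count_append, List.count_append, ct_rc, cf_rc] at hm2
      have hs1 : 1 ≤ m - (rc A).length := by omega
      have hs2 : m - (rc A).length ≤ B.length := by
        rw [List.length_append] at hm1
        omega
      have := hBs _ hs1 hs2
      omega
  rw [heval, rc_rc, ← hwAB]

lemma ncard_U1_eq {n i j : ℕ} (hi : 1 ≤ i) (hj : 1 ≤ j) :
    (U1 n i j).ncard = (U n (i + j + 1)).ncard := by
  have hbij : Set.BijOn (phi i) (U1 n i j) (U n (i + j + 1)) := by
    refine Set.InvOn.bijOn ⟨?_, ?_⟩ (mapsTo_phi hi hj) (mapsTo_psi hi hj)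
    · intro u hu; exact left_inv hi hu
    · intro w hw; exact right_inv hi hj hw
  rw [← hbij.image_eq, Set.ncard_image_of_injOn hbij.injOn]

end NPT


/-- For `n ≥ 2` and `i, j ∈ {1, …, n−1}`, the number of non-primitive
Dyck paths of semilength `n` whose last peak has height `j+1` and whose first peak has
height at least `i` equals the number of Dyck paths of semilength `n` whose last peak
has height `i+j+1` (zero when `i+j+1 > n`). -/
theorem nonprimitive_tail_count (n : ℕ) (hn : 2 ≤ n) (i j : ℕ)
    (hi : i ∈ Finset.Icc 1 (n - 1)) (hj : j ∈ Finset.Icc 1 (n - 1)) :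
    {w : List Bool | IsDyckWord w ∧ w.count true = n ∧ ¬ IsPrimitiveWord w ∧
        (peakHeights w).getLast? = some (j + 1) ∧ i ≤ (peakHeights w).headI}.ncard =
      {w : List Bool | IsDyckWord w ∧ w.count true = n ∧
        (peakHeights w).getLast? = some (i + j + 1)}.ncard := by
  rw [Finset.mem_Icc] at hi hj
  obtain ⟨hi1, hi2⟩ := hi
  obtain ⟨hj1, hj2⟩ := hj
  rw [NPT.LHS_eq n i j hn hi1 hi2 hj1,
    NPT.RHS_eq n (i + j + 1) (by omega) (by omega),
    Set.ncard_image_of_injective _ (List.append_left_injective _),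
    Set.ncard_image_of_injective _ (List.append_left_injective _)]
  exact NPT.ncard_U1_eq hi1 hj1
end

section
/- (Lemma 6, type A.) Let n ≥ 2, let e_1, …, e_n be the standard basis of ℤ^n, let Δ_+ = { e_a − e_b : 1 ≤ a < b ≤ n }, let the simple roots be α_a = e_a − e_{a+1} for 1 ≤ a ≤ n−1, and let α_max = e_1 − e_n. Then there do not exist ξ, ζ ∈ Δ_+, a nonempty set S of simple roots, and positive integers (m_s)_{s∈S} such that α_max = ξ + ζ + Σ_{s∈S} m_s·s, ξ + ζ ∉ Δ_+, and for every s ∈ S both ξ + s ∉ Δ_+ and ζ + s ∉ Δ_+. -/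
/-- The standard basis vector `e_a` of `ℤ^n`. -/
def stdBasis (n : ℕ) (a : Fin n) : Fin n → ℤ := Pi.single a 1

/-- The positive roots of type `A_{n−1}` realized in `ℤ^n`:
`Δ_+ = { e_a − e_b : a < b }`. -/
def posRootsA (n : ℕ) : Set (Fin n → ℤ) :=
  {v | ∃ a b : Fin n, a < b ∧ v = stdBasis n a - stdBasis n b}

/-- The simple roots of type `A_{n−1}`: `α_a = e_a − e_{a+1}`. -/
def simpleRootsA (n : ℕ) : Set (Fin n → ℤ) :=
  {v | ∃ a b : Fin n, (b : ℕ) = (a : ℕ) + 1 ∧ v = stdBasis n a - stdBasis n b}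

/-- Partial-sum functional: sum of the first `i+1` coordinates. -/
private def Fsum (n i : ℕ) (v : Fin n → ℤ) : ℤ :=
  ∑ j : Fin n, if (j : ℕ) ≤ i then v j else 0

private lemma Fsum_add (n i : ℕ) (u v : Fin n → ℤ) :
    Fsum n i (u + v) = Fsum n i u + Fsum n i v := by
  unfold Fsum
  rw [← Finset.sum_add_distrib]
  refine Finset.sum_congr rfl fun j _ => ?_
  by_cases h : (j : ℕ) ≤ i <;> simp [h]

private lemma Fsum_sub (n i : ℕ) (u v : Fin n → ℤ) :
    Fsum n i (u - v) = Fsum n i u - Fsum n i v := by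
  unfold Fsum
  rw [← Finset.sum_sub_distrib]
  refine Finset.sum_congr rfl fun j _ => ?_
  by_cases h : (j : ℕ) ≤ i <;> simp [h]

private lemma Fsum_smul (n i : ℕ) (c : ℤ) (v : Fin n → ℤ) :
    Fsum n i (c • v) = c * Fsum n i v := by
  unfold Fsum
  rw [Finset.mul_sum]
  refine Finset.sum_congr rfl fun j _ => ?_
  by_cases h : (j : ℕ) ≤ i <;> simp [h]

private lemma Fsum_single (n i : ℕ) (a : Fin n) :
    Fsum n i (stdBasis n a) = if (a : ℕ) ≤ i then 1 else 0 := by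
  unfold Fsum stdBasis
  rw [Finset.sum_eq_single a]
  · simp
  · intro j _ hj
    simp [Pi.single_eq_of_ne hj]
  · simp

private lemma Fsum_root (n i : ℕ) (a b : Fin n) :
    Fsum n i (stdBasis n a - stdBasis n b) =
      (if (a : ℕ) ≤ i then 1 else 0) - (if (b : ℕ) ≤ i then 1 else 0) := by
  rw [Fsum_sub, Fsum_single, Fsum_single]

private lemma Fsum_finsum (n i : ℕ) (S : Finset (Fin n → ℤ)) (f : (Fin n → ℤ) → (Fin n → ℤ)) :
    Fsum n i (∑ s ∈ S, f s) = ∑ s ∈ S, Fsum n i (f s) := by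
  classical
  induction S using Finset.induction with
  | empty => simp [Fsum]
  | insert _ _ h ih => rw [Finset.sum_insert h, Finset.sum_insert h, Fsum_add, ih]

private lemma mem_posRootsA {n : ℕ} {x y : Fin n} (h : x < y) :
    stdBasis n x - stdBasis n y ∈ posRootsA n := ⟨x, y, h, rfl⟩


private lemma arith_desc (A B C D : ℕ) (k : ℕ) (g g' : ℤ)
    (hEk : ((if A ≤ k then (1 : ℤ) else 0) - (if B ≤ k then 1 else 0)) +
      ((if C ≤ k then (1 : ℤ) else 0) - (if D ≤ k then 1 else 0)) + g = 1)
    (hEk1 : ((if A ≤ k + 1 then (1 : ℤ) else 0) - (if B ≤ k + 1 then 1 else 0)) +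
      ((if C ≤ k + 1 then (1 : ℤ) else 0) - (if D ≤ k + 1 then 1 else 0)) + g' = 1)
    (hg : 0 ≤ g) (hg' : 0 < g')
    (hB : B ≠ k + 1) (hD : D ≠ k + 1) : 0 < g := by
  split_ifs at hEk hEk1 <;> omega

private lemma arith_geq2 (A B C D : ℕ) (g : ℤ)
    (hE0 : ((if A ≤ 0 then (1 : ℤ) else 0) - (if B ≤ 0 then 1 else 0)) +
      ((if C ≤ 0 then (1 : ℤ) else 0) - (if D ≤ 0 then 1 else 0)) + g = 1)
    (hg : 0 < g) (hA1 : A ≠ 1) (hC1 : C ≠ 1) (hAB : A < B) (hCD : C < D) :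
    2 ≤ A ∧ 2 ≤ C := by
  split_ifs at hE0 <;> omega

private lemma arith_final (A B C D : ℕ) (g1 g2 : ℤ)
    (hEa1 : ((if A ≤ A - 1 then (1 : ℤ) else 0) - (if B ≤ A - 1 then 1 else 0)) +
      ((if C ≤ A - 1 then (1 : ℤ) else 0) - (if D ≤ A - 1 then 1 else 0)) + g1 = 1)
    (hEa : ((if A ≤ A then (1 : ℤ) else 0) - (if B ≤ A then 1 else 0)) +
      ((if C ≤ A then (1 : ℤ) else 0) - (if D ≤ A then 1 else 0)) + g2 = 1)
    (_hg1 : 0 ≤ g1) (hg2 : 0 ≤ g2) (hA2 : 2 ≤ A) (hAB : A < B) (hCD : C < D)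
    (hAD : A ≠ D) : 0 < g1 := by
  rw [if_neg (show ¬ A ≤ A - 1 by omega), if_neg (show ¬ B ≤ A - 1 by omega)] at hEa1
  rw [if_pos le_rfl, if_neg (show ¬ B ≤ A by omega)] at hEa
  split_ifs at hEa1 hEa <;> omega

/-- **Lemma 6, type A.** There is no decomposition
`α_max = ξ + ζ + Σ_{s∈S} m_s·s` with `ξ, ζ ∈ Δ_+`, `S` a nonempty set of simple roots,
`m_s ≥ 1`, such that `ξ + ζ ∉ Δ_+` and `ξ + s ∉ Δ_+`, `ζ + s ∉ Δ_+` for all `s ∈ S`.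
Here `α_max = e_1 − e_n`. -/
theorem no_decomposition_typeA (n : ℕ) (hn : 2 ≤ n) :
    ¬ ∃ (ξ ζ : Fin n → ℤ) (S : Finset (Fin n → ℤ)) (m : (Fin n → ℤ) → ℕ),
        ξ ∈ posRootsA n ∧ ζ ∈ posRootsA n ∧
        S.Nonempty ∧ (↑S : Set (Fin n → ℤ)) ⊆ simpleRootsA n ∧ (∀ s ∈ S, 1 ≤ m s) ∧
        stdBasis n ⟨0, by omega⟩ - stdBasis n ⟨n - 1, by omega⟩ =
          ξ + ζ + ∑ s ∈ S, (m s : ℤ) • s ∧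
        ξ + ζ ∉ posRootsA n ∧
        ∀ s ∈ S, ξ + s ∉ posRootsA n ∧ ζ + s ∉ posRootsA n := by
  classical
  rintro ⟨ξ, ζ, S, m, ⟨a, b, hab, rfl⟩, ⟨c, d, hcd, rfl⟩, ⟨s0, hs0⟩, hSsub, hm, heq, hsum,
    hcond⟩
  rw [Fin.lt_def] at hab hcd
  -- conditions coming from `ξ + s ∉ Δ_+`, `ζ + s ∉ Δ_+`
  have hKey : ∀ s ∈ S, ∀ j j' : Fin n, (j' : ℕ) = (j : ℕ) + 1 →
      s = stdBasis n j - stdBasis n j' →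
      (b : ℕ) ≠ (j : ℕ) ∧ (a : ℕ) ≠ (j : ℕ) + 1 ∧
      (d : ℕ) ≠ (j : ℕ) ∧ (c : ℕ) ≠ (j : ℕ) + 1 := by
    intro s hs j j' hj' hsj
    subst hsj
    obtain ⟨h1, h2⟩ := hcond _ hs
    refine ⟨?_, ?_, ?_, ?_⟩
    · intro h
      have hb : b = j := Fin.ext h
      subst hb
      exact h1 (by rw [sub_add_sub_cancel]; exact mem_posRootsA (Fin.lt_def.mpr (by omega)))
    · intro h
      have ha : a = j' := Fin.ext (by omega)
      subst ha
      exact h1 (by rw [sub_add_sub_cancel']; exact mem_posRootsA (Fin.lt_def.mpr (by omega)))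
    · intro h
      have hd : d = j := Fin.ext h
      subst hd
      exact h2 (by rw [sub_add_sub_cancel]; exact mem_posRootsA (Fin.lt_def.mpr (by omega)))
    · intro h
      have hc : c = j' := Fin.ext (by omega)
      subst hc
      exact h2 (by rw [sub_add_sub_cancel']; exact mem_posRootsA (Fin.lt_def.mpr (by omega)))
  -- the coordinate equations
  have hE : ∀ i : ℕ, i < n - 1 →
      ((if (a : ℕ) ≤ i then (1 : ℤ) else 0) - (if (b : ℕ) ≤ i then 1 else 0)) +
      ((if (c : ℕ) ≤ i then (1 : ℤ) else 0) - (if (d : ℕ) ≤ i then 1 else 0)) +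
      ∑ s ∈ S, (m s : ℤ) * Fsum n i s = 1 := by
    intro i hi
    have h := congrArg (Fsum n i) heq
    rw [Fsum_root, Fsum_add, Fsum_add, Fsum_root, Fsum_root, Fsum_finsum] at h
    simp only [Fsum_smul] at h
    rw [if_pos (Nat.zero_le i : ((⟨0, by omega⟩ : Fin n) : ℕ) ≤ i),
      if_neg (show ¬ ((⟨n - 1, by omega⟩ : Fin n) : ℕ) ≤ i from by
        show ¬ n - 1 ≤ i; omega)] at h
    linarith [h]
  have hF01 : ∀ (i : ℕ), ∀ s ∈ S, 0 ≤ Fsum n i s ∧ Fsum n i s ≤ 1 := by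
    intro i s hs
    obtain ⟨j, j', hj', rfl⟩ := hSsub hs
    rw [Fsum_root]
    split_ifs <;> omega
  have hG0 : ∀ i : ℕ, 0 ≤ ∑ s ∈ S, (m s : ℤ) * Fsum n i s := fun i =>
    Finset.sum_nonneg fun s hs => mul_nonneg (Int.natCast_nonneg _) ((hF01 i s hs).1)
  -- positivity of the `S`-part at position `i` forces `α_i ∈ S`
  have hGpos : ∀ i : ℕ, 0 < ∑ s ∈ S, (m s : ℤ) * Fsum n i s →
      ∃ j j' : Fin n, (j' : ℕ) = (j : ℕ) + 1 ∧ (j : ℕ) = i ∧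
        stdBasis n j - stdBasis n j' ∈ S := by
    intro i hpos
    obtain ⟨s, hs, hne⟩ := Finset.exists_ne_zero_of_sum_ne_zero (by omega :
      ∑ s ∈ S, (m s : ℤ) * Fsum n i s ≠ 0)
    have hne' : Fsum n i s ≠ 0 := fun h => hne (by rw [h, mul_zero])
    obtain ⟨j, j', hj', rfl⟩ := hSsub hs
    rw [Fsum_root] at hne'
    refine ⟨j, j', hj', ?_, hs⟩
    by_contra hji
    apply hne'
    split_ifs <;> omega
  -- the `S`-part is positive somewhere
  obtain ⟨t, t', ht', hst⟩ := hSsub hs0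
  have htlt : (t : ℕ) < n - 1 := by have := t'.isLt; omega
  have hGt : 0 < ∑ s ∈ S, (m s : ℤ) * Fsum n (t : ℕ) s := by
    have hF : Fsum n (t : ℕ) s0 = 1 := by
      rw [hst, Fsum_root, if_pos le_rfl, if_neg (by omega)]
      omega
    have h1 : (1 : ℤ) ≤ (m s0 : ℤ) * Fsum n (t : ℕ) s0 := by
      rw [hF, mul_one]
      exact_mod_cast hm s0 hs0
    calc (0 : ℤ) < (m s0 : ℤ) * Fsum n (t : ℕ) s0 := by linarith
      _ ≤ ∑ s ∈ S, (m s : ℤ) * Fsum n (t : ℕ) s :=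
        Finset.single_le_sum (fun s hs => mul_nonneg (Int.natCast_nonneg _)
          ((hF01 _ s hs).1)) hs0
  -- descend: the `S`-part is positive at 0
  have hdown : ∀ i : ℕ, i < n - 1 → 0 < ∑ s ∈ S, (m s : ℤ) * Fsum n i s →
      0 < ∑ s ∈ S, (m s : ℤ) * Fsum n 0 s := by
    intro i
    induction i with
    | zero => exact fun _ h => h
    | succ k ih =>
      intro hk hpos
      obtain ⟨j, j', hj', hji, hjS⟩ := hGpos (k + 1) hpos
      obtain ⟨hb1, ha2, hd1, hc2⟩ := hKey _ hjS j j' hj' rfl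
      have hEk1 := hE (k + 1) hk
      have hEk := hE k (by omega)
      have h0k := hG0 k
      exact ih (by omega) (arith_desc (a : ℕ) (b : ℕ) (c : ℕ) (d : ℕ) k _ _ hEk hEk1
        h0k hpos (by omega) (by omega))
  have hG0pos := hdown (t : ℕ) htlt hGt
  -- `α_0 ∈ S`, hence `a ≥ 2`, `c ≥ 2`
  obtain ⟨j, j', hj', hj0, hjS⟩ := hGpos 0 hG0pos
  obtain ⟨hb0, ha1, hd0, hc1⟩ := hKey _ hjS j j' hj' rfl
  have hE0 := hE 0 (by omega)
  have ha2 := arith_geq2 (a : ℕ) (b : ℕ) (c : ℕ) (d : ℕ) _ hE0 hG0pos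
    (by omega) (by omega) hab hcd
  -- `a ≠ d`
  have hAD : (a : ℕ) ≠ (d : ℕ) := by
    intro h
    have : a = d := Fin.ext h
    subst this
    exact hsum (by rw [sub_add_sub_cancel']; exact mem_posRootsA (Fin.lt_def.mpr (by omega)))
  -- positions `a - 1` and `a`
  have hblt := b.isLt
  have hEa1 := hE ((a : ℕ) - 1) (by omega)
  have hEa := hE (a : ℕ) (by omega)
  have h0a1 := hG0 ((a : ℕ) - 1)
  have h0a := hG0 (a : ℕ)
  have hGa1 : 0 < ∑ s ∈ S, (m s : ℤ) * Fsum n ((a : ℕ) - 1) s :=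
    arith_final (a : ℕ) (b : ℕ) (c : ℕ) (d : ℕ) _ _ hEa1 hEa h0a1 h0a ha2.1 hab hcd hAD
  obtain ⟨j2, j2', hj2', hj2v, hj2S⟩ := hGpos _ hGa1
  obtain ⟨_, hane, _, _⟩ := hKey _ hj2S j2 j2' hj2' rfl
  omega
end

section
/- (Lemma 6, type D.) Let n ≥ 4, let e_1, …, e_n be the standard basis of ℤ^n, let Δ_+ = { e_a − e_b : 1 ≤ a < b ≤ n } ∪ { e_a + e_b : 1 ≤ a < b ≤ n }, let the simple roots be α_a = e_a − e_{a+1} for 1 ≤ a ≤ n−1 together with α_n = e_{n−1} + e_n, and let α_max = e_1 + e_2. Then there do not exist ξ, ζ ∈ Δ_+, a nonempty set S of simple roots, and positive integers (m_s)_{s∈S} such that α_max = ξ + ζ + Σ_{s∈S} m_s·s, ξ + ζ ∉ Δ_+, and for every s ∈ S both ξ + s ∉ Δ_+ and ζ + s ∉ Δ_+. -/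
/-- The positive roots of type `D_n` realized in `ℤ^n`:
`Δ_+ = { e_a − e_b, e_a + e_b : a < b }`. -/
def posRootsD (n : ℕ) : Set (Fin n → ℤ) :=
  {v | ∃ a b : Fin n, a < b ∧
        (v = stdBasis n a - stdBasis n b ∨ v = stdBasis n a + stdBasis n b)}

/-- The simple roots of type `D_n`: `α_a = e_a − e_{a+1}` for `a < n`, and
`α_n = e_{n−1} + e_n`. -/
def simpleRootsD (n : ℕ) (hn : 4 ≤ n) : Set (Fin n → ℤ) :=
  {v | (∃ a b : Fin n, (b : ℕ) = (a : ℕ) + 1 ∧ v = stdBasis n a - stdBasis n b) ∨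
        v = stdBasis n ⟨n - 2, by omega⟩ + stdBasis n ⟨n - 1, by omega⟩}

namespace Stmt17


def ip {n : ℕ} (u v : Fin n → ℤ) : ℤ := ∑ i, u i * v i

lemma mem_iff {n : ℕ} (v : Fin n → ℤ) :
    v ∈ posRootsD n ↔ ∃ a b : Fin n, (a : ℕ) < (b : ℕ) ∧ ∃ ε : ℤ, (ε = 1 ∨ ε = -1) ∧
      ∀ i : Fin n, v i = if (i : ℕ) = (a : ℕ) then 1 else if (i : ℕ) = (b : ℕ) then ε else 0 := by
  constructor
  · rintro ⟨a, b, hab, h | h⟩ <;> rw [Fin.lt_def] at hab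
    · refine ⟨a, b, hab, -1, Or.inr rfl, fun i => ?_⟩
      subst h
      simp only [Pi.sub_apply, stdBasis, Pi.single_apply, Fin.ext_iff]
      split_ifs <;> omega
    · refine ⟨a, b, hab, 1, Or.inl rfl, fun i => ?_⟩
      subst h
      simp only [Pi.add_apply, stdBasis, Pi.single_apply, Fin.ext_iff]
      split_ifs <;> omega
  · rintro ⟨a, b, hab, ε, hε | hε, hv⟩ <;> subst hε <;>
      refine ⟨a, b, Fin.lt_def.mpr hab, ?_⟩
    · refine Or.inr (funext fun i => ?_)
      rw [hv i]
      simp only [Pi.add_apply, stdBasis, Pi.single_apply, Fin.ext_iff]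
      split_ifs <;> omega
    · refine Or.inl (funext fun i => ?_)
      rw [hv i]
      simp only [Pi.sub_apply, stdBasis, Pi.single_apply, Fin.ext_iff]
      split_ifs <;> omega

lemma ip_eval {n : ℕ} (u v : Fin n → ℤ) (a b : Fin n) (ε : ℤ) (hab : (a : ℕ) ≠ (b : ℕ))
    (hv : ∀ i : Fin n, v i = if (i : ℕ) = (a : ℕ) then 1 else if (i : ℕ) = (b : ℕ) then ε else 0) :
    ip u v = u a + ε * u b := by
  have key : ∀ i ∈ Finset.univ, u i * v i =
      (if i = a then u a else 0) + (if i = b then ε * u b else 0) := by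
    intro i _
    rw [hv i]
    rcases eq_or_ne i a with rfl | hia
    · rw [if_pos rfl, if_pos rfl, if_neg (fun h => hab (congrArg Fin.val h))]
      ring
    · rw [if_neg (fun h => hia (Fin.ext h)), if_neg hia]
      rcases eq_or_ne i b with rfl | hib
      · rw [if_pos rfl, if_pos rfl]; ring
      · rw [if_neg (fun h => hib (Fin.ext h)), if_neg hib]; ring
  unfold ip
  rw [Finset.sum_congr rfl key, Finset.sum_add_distrib,
    Finset.sum_ite_eq' Finset.univ a, Finset.sum_ite_eq' Finset.univ b]
  simp

lemma ip_add_right {n : ℕ} (u v w : Fin n → ℤ) : ip u (v + w) = ip u v + ip u w := by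
  simp [ip, mul_add, Finset.sum_add_distrib]

lemma ip_sum {n : ℕ} (u : Fin n → ℤ) (S : Finset (Fin n → ℤ)) (c : (Fin n → ℤ) → ℤ) :
    ip u (∑ s ∈ S, c s • s) = ∑ s ∈ S, c s * ip u s := by
  unfold ip
  simp only [Finset.sum_apply, Pi.smul_apply, smul_eq_mul, Finset.mul_sum]
  rw [Finset.sum_comm]
  refine Finset.sum_congr rfl fun s _ => ?_
  refine Finset.sum_congr rfl fun i _ => ?_
  ring

lemma build {n : ℕ} (ξ η : Fin n → ℤ) (p q : Fin n) (ε : ℤ)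
    (hpq : (p : ℕ) < (q : ℕ)) (hε : ε = 1 ∨ ε = -1)
    (hf : ∀ i : Fin n, ξ i + η i =
      if (i : ℕ) = (p : ℕ) then 1 else if (i : ℕ) = (q : ℕ) then ε else 0) :
    ξ + η ∈ posRootsD n :=
  (mem_iff _).2 ⟨p, q, hpq, ε, hε, fun i => by rw [Pi.add_apply, hf i]⟩

lemma add_mem' {n : ℕ} {ξ η : Fin n → ℤ} (hξ : ξ ∈ posRootsD n) (hη : η ∈ posRootsD n)
    (h : ip ξ η < 0) : ξ + η ∈ posRootsD n := by
  obtain ⟨a, b, hab, ε, hε, hξf⟩ := (mem_iff ξ).1 hξ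
  obtain ⟨c, d, hcd, δ, hδ, hηf⟩ := (mem_iff η).1 hη
  rw [ip_eval ξ η c d δ (Nat.ne_of_lt hcd) hηf, hξf c, hξf d] at h
  rcases hε with rfl | rfl <;> rcases hδ with rfl | rfl
  · -- ε = 1, δ = 1 : impossible
    split_ifs at h <;> omega
  · -- ε = 1, δ = -1
    rcases eq_or_ne (d : ℕ) (a : ℕ) with hda | hda
    · exact build ξ η c b 1 (by omega) (Or.inl rfl)
        (fun i => by rw [hξf i, hηf i]; split_ifs <;> omega)
    · rcases eq_or_ne (d : ℕ) (b : ℕ) with hdb | hdb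
      · have hca : (c : ℕ) ≠ (a : ℕ) := by
          intro hca; rw [if_pos hca, if_neg hda, if_pos hdb] at h; omega
        rcases Nat.lt_or_ge (c : ℕ) (a : ℕ) with hlt | hge
        · exact build ξ η c a 1 hlt (Or.inl rfl)
            (fun i => by rw [hξf i, hηf i]; split_ifs <;> omega)
        · exact build ξ η a c 1 (by omega) (Or.inl rfl)
            (fun i => by rw [hξf i, hηf i]; split_ifs <;> omega)
      · split_ifs at h <;> omega
  · -- ε = -1, δ = 1
    rcases eq_or_ne (c : ℕ) (b : ℕ) with hcb | hcb
    · exact build ξ η a d 1 (by omega) (Or.inl rfl)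
        (fun i => by rw [hξf i, hηf i]; split_ifs <;> omega)
    · rcases eq_or_ne (d : ℕ) (b : ℕ) with hdb | hdb
      · have hca : (c : ℕ) ≠ (a : ℕ) := by
          intro hca; rw [if_pos hca, if_pos hdb] at h; omega
        rcases Nat.lt_or_ge (c : ℕ) (a : ℕ) with hlt | hge
        · exact build ξ η c a 1 hlt (Or.inl rfl)
            (fun i => by rw [hξf i, hηf i]; split_ifs <;> omega)
        · exact build ξ η a c 1 (by omega) (Or.inl rfl)
            (fun i => by rw [hξf i, hηf i]; split_ifs <;> omega)
      · split_ifs at h <;> omega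
  · -- ε = -1, δ = -1
    rcases eq_or_ne (c : ℕ) (b : ℕ) with hcb | hcb
    · exact build ξ η a d (-1) (by omega) (Or.inr rfl)
        (fun i => by rw [hξf i, hηf i]; split_ifs <;> omega)
    · rcases eq_or_ne (d : ℕ) (a : ℕ) with hda | hda
      · exact build ξ η c b (-1) (by omega) (Or.inr rfl)
          (fun i => by rw [hξf i, hηf i]; split_ifs <;> omega)
      · split_ifs at h <;> omega

lemma F_pos {n : ℕ} {v : Fin n → ℤ} (hv : v ∈ posRootsD n) :
    0 < ip (fun i : Fin n => (n : ℤ) - (i : ℕ)) v := by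
  obtain ⟨a, b, hab, ε, hε, hvf⟩ := (mem_iff v).1 hv
  rw [ip_eval _ v a b ε (Nat.ne_of_lt hab) hvf]
  have hbn := b.isLt
  show (0 : ℤ) < ((n : ℤ) - (a : ℕ)) + ε * ((n : ℤ) - (b : ℕ))
  rcases hε with rfl | rfl <;> omega



lemma simple_sub {n : ℕ} (hn : 4 ≤ n) : simpleRootsD n hn ⊆ posRootsD n := by
  rintro v (⟨a, b, hab, hv⟩ | hv)
  · exact ⟨a, b, Fin.lt_def.mpr (by omega), Or.inl hv⟩
  · exact ⟨⟨n - 2, by omega⟩, ⟨n - 1, by omega⟩, Fin.lt_def.mpr (by simp; omega), Or.inr hv⟩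

end Stmt17

open Stmt17 in
/-- **Lemma 6, type D.** There is no decomposition
`α_max = ξ + ζ + Σ_{s∈S} m_s·s` with `ξ, ζ ∈ Δ_+`, `S` a nonempty set of simple roots,
`m_s ≥ 1`, such that `ξ + ζ ∉ Δ_+` and `ξ + s ∉ Δ_+`, `ζ + s ∉ Δ_+` for all `s ∈ S`.
Here `α_max = e_1 + e_2`. -/
theorem no_decomposition_typeD (n : ℕ) (hn : 4 ≤ n) :
    ¬ ∃ (ξ ζ : Fin n → ℤ) (S : Finset (Fin n → ℤ)) (m : (Fin n → ℤ) → ℕ),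
        ξ ∈ posRootsD n ∧ ζ ∈ posRootsD n ∧
        S.Nonempty ∧ (↑S : Set (Fin n → ℤ)) ⊆ simpleRootsD n hn ∧ (∀ s ∈ S, 1 ≤ m s) ∧
        stdBasis n ⟨0, by omega⟩ + stdBasis n ⟨1, by omega⟩ =
          ξ + ζ + ∑ s ∈ S, (m s : ℤ) • s ∧
        ξ + ζ ∉ posRootsD n ∧
        ∀ s ∈ S, ξ + s ∉ posRootsD n ∧ ζ + s ∉ posRootsD n := by
  rintro ⟨ξ, ζ, S, m, hξ, hζ, -, hSsub, -, hEq, hξζ, hall⟩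
  have h0n : 0 < n := by omega
  have h1n : 1 < n := by omega
  set i0 : Fin n := ⟨0, h0n⟩ with hi0
  set i1 : Fin n := ⟨1, h1n⟩ with hi1
  have hv0 : (i0 : ℕ) = 0 := rfl
  have hv1 : (i1 : ℕ) = 1 := rfl
  have hEq' : stdBasis n i0 + stdBasis n i1 = ξ + ζ + ∑ s ∈ S, (m s : ℤ) • s := hEq
  obtain ⟨a, b, hab, ε, hε, hξf⟩ := (mem_iff ξ).1 hξ
  have hbn := b.isLt
  have e01 : ∀ i : Fin n, (stdBasis n i0 + stdBasis n i1) i =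
      if (i : ℕ) = (i0 : ℕ) then 1 else if (i : ℕ) = (i1 : ℕ) then 1 else 0 := by
    intro i
    simp only [Pi.add_apply, stdBasis, Pi.single_apply, Fin.ext_iff]
    split_ifs <;> omega
  have L : ip ξ (stdBasis n i0 + stdBasis n i1) = ξ i0 + 1 * ξ i1 :=
    ip_eval ξ _ i0 i1 1 (by omega) e01
  have hself : ip ξ ξ = 2 := by
    rw [ip_eval ξ ξ a b ε (Nat.ne_of_lt hab) hξf, hξf a, hξf b]
    rcases hε with rfl | rfl <;> (split_ifs <;> omega)
  have hξζnn : 0 ≤ ip ξ ζ := by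
    by_contra hc
    push_neg at hc
    exact hξζ (add_mem' hξ hζ hc)
  have hsnn : ∀ s ∈ S, (0 : ℤ) ≤ (m s : ℤ) * ip ξ s := by
    intro s hs
    have hsp : s ∈ posRootsD n := simple_sub hn (hSsub hs)
    refine mul_nonneg (Int.natCast_nonneg _) ?_
    by_contra hc
    push_neg at hc
    exact (hall s hs).1 (add_mem' hξ hsp hc)
  have key : 2 ≤ ξ i0 + ξ i1 := by
    have hcongr := congrArg (ip ξ) hEq'
    rw [L, ip_add_right, ip_add_right, ip_sum, hself] at hcongr
    have hsum : 0 ≤ ∑ s ∈ S, (m s : ℤ) * ip ξ s := Finset.sum_nonneg hsnn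
    linarith
  have hval : (a : ℕ) = 0 ∧ (b : ℕ) = 1 ∧ ε = 1 := by
    rw [hξf i0, hξf i1, hv0, hv1] at key
    rcases hε with rfl | rfl <;> (split_ifs at key <;> omega)
  obtain ⟨ha0, hb1, rfl⟩ := hval
  have hξE : ξ = stdBasis n i0 + stdBasis n i1 := by
    funext i
    rw [hξf i, e01 i, ha0, hb1, hv0, hv1]
  rw [hξE] at hEq'
  have hz : ζ + ∑ s ∈ S, (m s : ℤ) • s = 0 := by
    have := hEq'.symm
    abel_nf at this ⊢
    linear_combination this
  have hz' := congrArg (ip (fun i : Fin n => (n : ℤ) - (i : ℕ))) hz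
  rw [ip_add_right, ip_sum] at hz'
  have hzero : ip (fun i : Fin n => (n : ℤ) - (i : ℕ)) (0 : Fin n → ℤ) = 0 := by
    simp [ip]
  rw [hzero] at hz'
  have hζpos := F_pos hζ
  have hsumnn : 0 ≤ ∑ s ∈ S, (m s : ℤ) * ip (fun i : Fin n => (n : ℤ) - (i : ℕ)) s :=
    Finset.sum_nonneg fun s hs =>
      mul_nonneg (Int.natCast_nonneg _) (F_pos (simple_sub hn (hSsub hs))).le
  linarith
end
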